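/- arXiv:math/0610355 — 6 statements merged into one kernel-verified Lean document; each statement's English description precedes it below -/
import Mathlib

section
/- Let μ be a probability measure on ℝ. Then ∫ e^{iux} dμ(x) → 0 as |u| → ∞ with u ranging over the reals, if and only if ∫ e^{2πikx} dμ(x) → 0 as |k| → ∞ with k ranging over the integers (equivalently, the pushforward of μ under the fractional part map x ↦ {x} is a Rajchman measure on the torus). -/
open MeasureTheory Filter Set
open scoped Topology

noncomputable section

/-- `ef v x = exp(2 π i v x)`. -/
def ef (v : ℝ) (x : ℝ) : ℂ := Complex.exp (2 * Real.pi * Complex.I * v * x)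

lemma ef_eq (v x : ℝ) : ef v x = Complex.exp (((2 * Real.pi * v * x : ℝ) : ℂ) * Complex.I) := by
  unfold ef; push_cast; ring_nf

lemma norm_ef (v x : ℝ) : ‖ef v x‖ = 1 := by
  rw [ef_eq, Complex.norm_exp_ofReal_mul_I]

lemma continuous_ef (v : ℝ) : Continuous (ef v) := by
  unfold ef; fun_prop

lemma ef_mul (u v x : ℝ) : ef u x * ef v x = ef (u + v) x := by
  unfold ef; rw [← Complex.exp_add]; push_cast; ring_nf

lemma conj_ef (v x : ℝ) : (starRingEnd ℂ) (ef v x) = ef (-v) x := by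
  unfold ef
  rw [← Complex.exp_conj]
  congr 1
  simp only [map_mul, Complex.conj_ofReal, Complex.conj_I, map_ofNat]
  push_cast; ring

variable (μ : Measure ℝ) [IsProbabilityMeasure μ]

lemma ef_memℒp (v : ℝ) (p : ENNReal) : MemLp (ef v) p μ :=
  MemLp.of_bound (continuous_ef v).aestronglyMeasurable 1
    (Eventually.of_forall fun x => le_of_eq (norm_ef v x))

lemma ef_integrable (v : ℝ) : Integrable (ef v) μ :=
  memLp_one_iff_integrable.mp (ef_memℒp μ v 1)

/-- `ef v` as an element of `L²(μ)`. -/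
def efL2 (v : ℝ) : Lp ℂ 2 μ := (ef_memℒp μ v 2).toLp (ef v)

lemma norm_efL2_le (v : ℝ) : ‖efL2 μ v‖ ≤ 1 := by
  rw [efL2, Lp.norm_toLp]
  have h : eLpNorm (ef v) 2 μ ≤ 1 := by
    have := eLpNorm_le_of_ae_bound (μ := μ) (p := 2)
      (f := ef v) (C := 1) (Eventually.of_forall fun x => le_of_eq (norm_ef v x))
    simpa using this
  calc (eLpNorm (ef v) 2 μ).toReal ≤ (1 : ENNReal).toReal :=
        ENNReal.toReal_mono (by norm_num) h
    _ = 1 := by simp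

lemma inner_efL2 (u v : ℝ) :
    (inner ℂ (efL2 μ u) (efL2 μ v) : ℂ) = ∫ x, ef (v - u) x ∂μ := by
  rw [MeasureTheory.L2.inner_def]
  have h1 : ∀ᵐ x ∂μ, (efL2 μ u : ℝ → ℂ) x = ef u x := (ef_memℒp μ u 2).coeFn_toLp
  have h2 : ∀ᵐ x ∂μ, (efL2 μ v : ℝ → ℂ) x = ef v x := (ef_memℒp μ v 2).coeFn_toLp
  apply integral_congr_ae
  filter_upwards [h1, h2] with x hx1 hx2
  rw [RCLike.inner_apply', hx1, hx2, conj_ef, ef_mul]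
  congr 1
  ring

lemma helper_bound {f : ℤ → ℂ} (h : Tendsto f cofinite (𝓝 0)) {ε : ℝ} (hε : 0 < ε) :
    ∃ B : ℝ, ∀ k : ℤ, B ≤ |(k : ℝ)| → ‖f k‖ < ε := by
  have hfin : {k : ℤ | ¬ ‖f k‖ < ε}.Finite :=
    Filter.eventually_cofinite.mp ((NormedAddCommGroup.tendsto_nhds_zero.mp h) ε hε)
  obtain ⟨B0, hB0⟩ := (hfin.image fun k : ℤ => |(k : ℝ)|).bddAbove
  refine ⟨B0 + 1, fun k hk => ?_⟩
  by_contra hc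
  have : |(k : ℝ)| ≤ B0 := hB0 (Set.mem_image_of_mem _ hc)
  linarith

lemma key (hyp : Tendsto (fun k : ℤ => ∫ x, ef k x ∂μ) cofinite (𝓝 0)) (t : ℝ) :
    Tendsto (fun k : ℤ => ∫ x, ef (k + t) x ∂μ) cofinite (𝓝 0) := by
  set S : Submodule ℂ (Lp ℂ 2 μ) := Submodule.span ℂ (Set.range fun j : ℤ => efL2 μ j) with hS
  set V := S.topologicalClosure with hV
  haveI : CompleteSpace V := S.isClosed_topologicalClosure.completeSpace_coe
  have hmemV : ∀ k : ℤ, efL2 μ (-(k : ℝ)) ∈ V := by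
    intro k
    exact S.le_topologicalClosure (Submodule.subset_span ⟨-k, by push_cast; rfl⟩)
  have hspan : ∀ P ∈ S, Tendsto (fun k : ℤ => (inner ℂ (efL2 μ (-(k:ℝ))) P : ℂ)) cofinite (𝓝 0) := by
    intro P hP
    induction hP using Submodule.span_induction with
    | mem x hx =>
        obtain ⟨j, rfl⟩ := hx
        have heq : ∀ k : ℤ, (inner ℂ (efL2 μ (-(k:ℝ))) (efL2 μ j) : ℂ)
            = ∫ x, ef ((k + j : ℤ) : ℝ) x ∂μ := by
          intro k
          rw [inner_efL2]
          congr 1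
          push_cast
          ring
        simp_rw [heq]
        have hshift : Tendsto (fun k : ℤ => k + j) cofinite cofinite :=
          (add_left_injective j).tendsto_cofinite
        exact hyp.comp hshift
    | zero => simpa using (tendsto_const_nhds : Tendsto (fun _ : ℤ => (0:ℂ)) cofinite (𝓝 0))
    | add x y hx hy ihx ihy =>
        simp_rw [inner_add_right]
        simpa using ihx.add ihy
    | smul c x hx ihx =>
        simp_rw [inner_smul_right]
        simpa using ihx.const_mul c
  have hclos : ∀ g ∈ V, Tendsto (fun k : ℤ => (inner ℂ (efL2 μ (-(k:ℝ))) g : ℂ)) cofinite (𝓝 0) := by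
    intro g hg
    rw [NormedAddCommGroup.tendsto_nhds_zero]
    intro ε hε
    obtain ⟨P, hPS, hPdist⟩ := Metric.mem_closure_iff.mp hg (ε/2) (by linarith)
    have h1 := (NormedAddCommGroup.tendsto_nhds_zero.mp (hspan P hPS)) (ε/2) (by linarith)
    filter_upwards [h1] with k hk
    have hsplit : (inner ℂ (efL2 μ (-(k:ℝ))) g : ℂ)
        = inner ℂ (efL2 μ (-(k:ℝ))) P + inner ℂ (efL2 μ (-(k:ℝ))) (g - P) := by
      rw [inner_sub_right]; ring
    have hCS : ‖(inner ℂ (efL2 μ (-(k:ℝ))) (g - P) : ℂ)‖ ≤ ‖g - P‖ := by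
      calc ‖(inner ℂ (efL2 μ (-(k:ℝ))) (g - P) : ℂ)‖ ≤ ‖efL2 μ (-(k:ℝ))‖ * ‖g - P‖ :=
            norm_inner_le_norm _ _
        _ ≤ 1 * ‖g - P‖ := mul_le_mul_of_nonneg_right (norm_efL2_le μ _) (norm_nonneg _)
        _ = ‖g - P‖ := one_mul _
    have hd : ‖g - P‖ < ε/2 := by rw [← dist_eq_norm]; exact hPdist
    calc ‖(inner ℂ (efL2 μ (-(k:ℝ))) g : ℂ)‖
        ≤ ‖(inner ℂ (efL2 μ (-(k:ℝ))) P : ℂ)‖ + ‖(inner ℂ (efL2 μ (-(k:ℝ))) (g - P) : ℂ)‖ := by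
          rw [hsplit]; exact norm_add_le _ _
      _ < ε/2 + ε/2 := by
          apply add_lt_add_of_lt_of_le hk (hCS.trans hd.le)
      _ = ε := by ring
  obtain ⟨g, hgV, r, hr, hdecomp⟩ := V.exists_add_mem_mem_orthogonal (efL2 μ t)
  have hmain : ∀ k : ℤ, (∫ x, ef (k + t) x ∂μ) = (inner ℂ (efL2 μ (-(k:ℝ))) g : ℂ) := by
    intro k
    have h1 : (∫ x, ef ((k:ℝ) + t) x ∂μ) = (inner ℂ (efL2 μ (-(k:ℝ))) (efL2 μ t) : ℂ) := by
      rw [inner_efL2]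
      congr 1
      ring
    rw [h1, hdecomp, inner_add_right,
      (Submodule.mem_orthogonal _ _).mp hr _ (hmemV k), add_zero]
  simp only [hmain]
  exact hclos g hgV

lemma unif {ε : ℝ} (hε : 0 < ε) :
    ∃ δ > 0, ∀ u v : ℝ, |u - v| ≤ δ →
      ‖(∫ x, ef u x ∂μ) - ∫ x, ef v x ∂μ‖ ≤ ε := by
  have hcont : ContinuousAt (fun s : ℝ => ∫ x, ‖ef s x - 1‖ ∂μ) 0 := by
    apply MeasureTheory.continuousAt_of_dominated (bound := fun _ : ℝ => (2:ℝ))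
    · exact Eventually.of_forall fun s =>
        (((continuous_ef s).sub continuous_const).norm).aestronglyMeasurable
    · refine Eventually.of_forall fun s => Eventually.of_forall fun x => ?_
      rw [Real.norm_eq_abs, abs_of_nonneg (norm_nonneg _)]
      calc ‖ef s x - 1‖ ≤ ‖ef s x‖ + ‖(1:ℂ)‖ := norm_sub_le _ _
        _ ≤ 2 := by rw [norm_ef]; norm_num
    · exact integrable_const 2
    · refine Eventually.of_forall fun x => ?_
      have hc : Continuous fun s : ℝ => ef s x := by unfold ef; fun_prop
      exact ((hc.sub continuous_const).norm).continuousAt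
  have h0 : (∫ x, ‖ef (0:ℝ) x - 1‖ ∂μ) = 0 := by
    have : ∀ x : ℝ, ef (0:ℝ) x = 1 := fun x => by simp [ef]
    simp [this]
  rw [ContinuousAt, h0] at hcont
  have := (Metric.tendsto_nhds.mp hcont) ε hε
  obtain ⟨δ0, hδ0pos, hδ0⟩ := Metric.eventually_nhds_iff.mp this
  refine ⟨δ0/2, by linarith, fun u v huv => ?_⟩
  have hsub : (∫ x, ef u x ∂μ) - ∫ x, ef v x ∂μ = ∫ x, (ef u x - ef v x) ∂μ :=
    (integral_sub (ef_integrable μ u) (ef_integrable μ v)).symm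
  rw [hsub]
  have hnorm : ∀ x : ℝ, ‖ef u x - ef v x‖ = ‖ef (u - v) x - 1‖ := by
    intro x
    have : ef u x - ef v x = ef v x * (ef (u - v) x - 1) := by
      rw [mul_sub, ef_mul, mul_one]
      congr 2
      ring
    rw [this, norm_mul, norm_ef, one_mul]
  calc ‖∫ x, (ef u x - ef v x) ∂μ‖ ≤ ∫ x, ‖ef u x - ef v x‖ ∂μ :=
        norm_integral_le_integral_norm _
    _ = ∫ x, ‖ef (u - v) x - 1‖ ∂μ := by
        apply integral_congr_ae
        exact Eventually.of_forall fun x => hnorm x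
    _ ≤ ε := by
        have hd : dist (u - v) 0 < δ0 := by
          rw [Real.dist_eq, sub_zero]
          calc |u - v| ≤ δ0/2 := huv
            _ < δ0 := by linarith
        have := hδ0 hd
        rw [Real.dist_eq, sub_zero] at this
        calc (∫ x, ‖ef (u - v) x - 1‖ ∂μ)
            ≤ |∫ x, ‖ef (u - v) x - 1‖ ∂μ| := le_abs_self _
          _ ≤ ε := le_of_lt this

lemma hard (hyp : Tendsto (fun k : ℤ => ∫ x, ef k x ∂μ) cofinite (𝓝 0)) :
    Tendsto (fun v : ℝ => ∫ x, ef v x ∂μ) (cocompact ℝ) (𝓝 0) := by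
  rw [NormedAddCommGroup.tendsto_nhds_zero]
  intro ε hε
  obtain ⟨δ, hδpos, hδ⟩ := unif μ (show (0:ℝ) < ε/3 by linarith)
  set M : ℕ := ⌈1/δ⌉₊ + 1 with hM
  have hBj : ∀ j : ℕ, ∃ B : ℝ, ∀ k : ℤ, B ≤ |(k:ℝ)| →
      ‖∫ x, ef (k + j*δ) x ∂μ‖ < ε/3 :=
    fun j => helper_bound (key μ hyp (j*δ)) (by linarith)
  choose B hB using hBj
  obtain ⟨Bm, hBm'⟩ := Finset.exists_le ((Finset.range M).image B)
  have hBm : ∀ j ∈ Finset.range M, B j ≤ Bm := fun j hj =>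
    hBm' _ (Finset.mem_image_of_mem B hj)
  set C : ℝ := max Bm 0 + 2 with hC
  have hsub : (Metric.closedBall (0:ℝ) C)ᶜ ⊆ {v : ℝ | ‖∫ x, ef v x ∂μ‖ < ε} := by
    intro v hv
    have hvC : C < |v| := by
      simp only [Set.mem_compl_iff, Metric.mem_closedBall, not_le, Real.dist_eq,
        sub_zero] at hv
      exact hv
    set k : ℤ := ⌊v⌋ with hk
    set t : ℝ := Int.fract v with ht
    have ht0 : 0 ≤ t := Int.fract_nonneg v
    have ht1 : t < 1 := Int.fract_lt_one v
    set j : ℕ := ⌊t/δ⌋₊ with hj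
    have hjM : j ∈ Finset.range M := by
      rw [Finset.mem_range, hM]
      have h1 : j ≤ ⌊1/δ⌋₊ := Nat.floor_mono (by
        apply div_le_div_of_nonneg_right ht1.le hδpos.le)
      have h2 : ⌊1/δ⌋₊ ≤ ⌈1/δ⌉₊ := Nat.floor_le_ceil _
      omega
    have hjt : (j:ℝ) * δ ≤ t := by
      have := Nat.floor_le (a := t/δ) (by positivity)
      calc (j:ℝ) * δ ≤ (t/δ) * δ := by
            apply mul_le_mul_of_nonneg_right this hδpos.le
        _ = t := by field_simp
    have hjt2 : t - (j:ℝ)*δ ≤ δ := by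
      have := Nat.lt_floor_add_one (t/δ)
      have h2 : t < ((j:ℝ) + 1) * δ := by
        calc t = (t/δ) * δ := by field_simp
          _ < ((j:ℝ) + 1) * δ := by
              apply mul_lt_mul_of_pos_right ?_ hδpos
              exact_mod_cast this
      nlinarith
    have hvk : v = (k:ℝ) + t := (Int.floor_add_fract v).symm
    have hdist : |v - ((k:ℝ) + (j:ℝ)*δ)| ≤ δ := by
      rw [hvk]
      have : (k:ℝ) + t - ((k:ℝ) + (j:ℝ)*δ) = t - (j:ℝ)*δ := by ring
      rw [this, abs_of_nonneg (by linarith)]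
      exact hjt2
    have hkbig : B j ≤ |(k:ℝ)| := by
      have h1 : |v| ≤ |(k:ℝ)| + 1 := by
        rw [hvk]
        calc |(k:ℝ) + t| ≤ |(k:ℝ)| + |t| := abs_add_le _ _
          _ ≤ |(k:ℝ)| + 1 := by rw [abs_of_nonneg ht0]; linarith
      have h2 : B j ≤ Bm := hBm j hjM
      have h3 : Bm ≤ max Bm 0 := le_max_left _ _
      rw [hC] at hvC
      linarith
    have hnear := hB j k hkbig
    have hfar := hδ v ((k:ℝ) + (j:ℝ)*δ) hdist
    calc ‖∫ x, ef v x ∂μ‖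
        ≤ ‖(∫ x, ef v x ∂μ) - ∫ x, ef ((k:ℝ) + (j:ℝ)*δ) x ∂μ‖
          + ‖∫ x, ef ((k:ℝ) + (j:ℝ)*δ) x ∂μ‖ := by
            have heq : (∫ x, ef v x ∂μ)
                = ((∫ x, ef v x ∂μ) - ∫ x, ef ((k:ℝ) + (j:ℝ)*δ) x ∂μ)
                  + ∫ x, ef ((k:ℝ) + (j:ℝ)*δ) x ∂μ := by ring
            conv_lhs => rw [heq]
            exact norm_add_le _ _
      _ < ε/3 + ε/3 := add_lt_add_of_le_of_lt hfar hnear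
      _ < ε := by linarith
  exact Filter.mem_of_superset
    (Filter.mem_cocompact.mpr ⟨Metric.closedBall 0 C, isCompact_closedBall _ _,
      subset_rfl⟩) hsub

end

/-- For a probability measure `μ` on `ℝ`, the Fourier transform
`u ↦ ∫ e^{iux} dμ` vanishes as `|u| → ∞` over the reals iff the Fourier coefficients
`k ↦ ∫ e^{2πikx} dμ`, `k ∈ ℤ`, vanish as `|k| → ∞` (i.e. the fractional-part
pushforward of `μ` is Rajchman on the torus). -/
theorem rajchman_iff_integer_frequencies
    (μ : Measure ℝ) [IsProbabilityMeasure μ] :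
    Tendsto (fun u : ℝ => ∫ x, Complex.exp (Complex.I * u * x) ∂μ)
      (cocompact ℝ) (𝓝 0) ↔
    Tendsto (fun k : ℤ => ∫ x, Complex.exp (2 * Real.pi * Complex.I * k * x) ∂μ)
      (cocompact ℤ) (𝓝 0) := by
  constructor
  · intro h
    have hco : Tendsto (fun k : ℤ => (2 * Real.pi * k : ℝ)) (cocompact ℤ) (cocompact ℝ) := by
      rw [cocompact_eq_cofinite]
      have h2 : Tendsto (fun r : ℝ => 2 * Real.pi * r) (cocompact ℝ) (cocompact ℝ) :=
        (Homeomorph.mulLeft₀ (2*Real.pi) (by positivity)).isClosedEmbedding.tendsto_cocompact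
      exact h2.comp Int.tendsto_coe_cofinite
    have h3 := h.comp hco
    have heq : (fun k : ℤ => ∫ x, Complex.exp (2 * Real.pi * Complex.I * k * x) ∂μ)
        = (fun u : ℝ => ∫ x, Complex.exp (Complex.I * u * x) ∂μ)
            ∘ (fun k : ℤ => (2 * Real.pi * k : ℝ)) := by
      funext k
      simp only [Function.comp]
      apply integral_congr_ae
      refine Eventually.of_forall fun x => ?_
      have hx : (Complex.I * ((2 * Real.pi * k : ℝ) : ℂ) * x)
          = 2 * Real.pi * Complex.I * k * x := by
        push_cast
        ring
      show Complex.exp (2 * Real.pi * Complex.I * k * x)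
          = Complex.exp (Complex.I * ((2 * Real.pi * k : ℝ) : ℂ) * x)
      rw [hx]
    rw [heq]
    exact h3
  · intro h
    have hyp : Tendsto (fun k : ℤ => ∫ x, ef (k:ℝ) x ∂μ) cofinite (𝓝 0) := by
      rw [← cocompact_eq_cofinite ℤ]
      have heq : (fun k : ℤ => ∫ x, ef (k:ℝ) x ∂μ)
          = fun k : ℤ => ∫ x, Complex.exp (2 * Real.pi * Complex.I * k * x) ∂μ := by
        funext k
        apply integral_congr_ae
        refine Eventually.of_forall fun x => ?_
        have hx : (2 * (Real.pi:ℂ) * Complex.I * (((k:ℝ)):ℂ) * (x:ℂ))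
            = 2 * Real.pi * Complex.I * (k:ℂ) * x := by
          push_cast
          ring
        show Complex.exp (2 * Real.pi * Complex.I * (((k:ℝ)):ℂ) * x)
            = Complex.exp (2 * Real.pi * Complex.I * (k:ℂ) * x)
        rw [hx]
      rw [heq]
      exact h
    have hhard := hard μ hyp
    have hco : Tendsto (fun u : ℝ => u / (2 * Real.pi)) (cocompact ℝ) (cocompact ℝ) := by
      have hfun : (fun u : ℝ => u / (2 * Real.pi)) = fun u : ℝ => (2 * Real.pi)⁻¹ * u := by
        funext u
        rw [div_eq_inv_mul]
      rw [hfun]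
      exact (Homeomorph.mulLeft₀ ((2*Real.pi)⁻¹)
        (by positivity)).isClosedEmbedding.tendsto_cocompact
    have h3 := hhard.comp hco
    have heq : (fun u : ℝ => ∫ x, Complex.exp (Complex.I * u * x) ∂μ)
        = (fun v : ℝ => ∫ x, ef v x ∂μ) ∘ (fun u : ℝ => u / (2 * Real.pi)) := by
      funext u
      simp only [Function.comp]
      apply integral_congr_ae
      refine Eventually.of_forall fun x => ?_
      have hπ : (Real.pi : ℂ) ≠ 0 := Complex.ofReal_ne_zero.mpr Real.pi_ne_zero
      have hx : Complex.I * (u:ℂ) * (x:ℂ)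
          = 2 * Real.pi * Complex.I * ((u / (2 * Real.pi) : ℝ) : ℂ) * x := by
        push_cast
        field_simp
      show Complex.exp (Complex.I * (u:ℂ) * x) = ef (u / (2 * Real.pi)) x
      unfold ef
      rw [hx]
    rw [heq]
    exact h3
end

section
/- Let Y, Y_n (n ∈ ℕ) be measurable maps from a probability space (Ω, 𝒜, ℙ) to a measurable space (E, ℱ), P_Y the law of Y, α_n positive reals, and 𝒟 an algebra of bounded measurable real functions on E containing the constants and dense in L²(P_Y). Assume hypothesis (H3): for each φ ∈ 𝒟 there exists Ã[φ] ∈ L²(P_Y) such that for all χ ∈ 𝒟, α_n 𝔼[(φ(Y_n) − φ(Y))(χ(Y_n) − χ(Y))] → −2 ∫ Ã[φ] χ dP_Y. Define ℰ(φ, χ) := lim_n (α_n/2) 𝔼[(φ(Y_n) − φ(Y))(χ(Y_n) − χ(Y))] = −∫ Ã[φ] χ dP_Y for φ, χ ∈ 𝒟. Then ℰ(φ, φ) ≥ 0 for all φ ∈ 𝒟, and the form ℰ is closable on 𝒟 in L²(P_Y): for every sequence (φ_k) in 𝒟 with ∫ φ_k² dP_Y → 0 and ℰ(φ_k − φ_l,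 φ_k − φ_l) → 0 as k, l → ∞, one has ℰ(φ_k, φ_k) → 0. -/
open MeasureTheory Filter Set
open scoped Topology

lemma aux_l2_mul_integrable {α : Type*} [MeasurableSpace α] {μ : Measure α} {f g : α → ℝ}
    (hf : MemLp f 2 μ) (hg : MemLp g 2 μ) : Integrable (fun x => f x * g x) μ := by
  have h : MemLp (f • g) 1 μ := hg.smul hf (hpqr := ⟨by
    norm_num
    rw [ENNReal.inv_two_add_inv_two]⟩)
  exact memLp_one_iff_integrable.mp h

/-- Cauchy–Schwarz for integrals of L² functions. -/
lemma aux_integral_cs {α : Type*} [MeasurableSpace α] {μ : Measure α} {f g : α → ℝ}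
    (hf : MemLp f 2 μ) (hg : MemLp g 2 μ) :
    |∫ x, f x * g x ∂μ| ≤ Real.sqrt (∫ x, f x ^ 2 ∂μ) * Real.sqrt (∫ x, g x ^ 2 ∂μ) := by
  have hf2 : Integrable (fun x => f x ^ 2) μ := hf.integrable_sq
  have hg2 : Integrable (fun x => g x ^ 2) μ := hg.integrable_sq
  have hfg : Integrable (fun x => f x * g x) μ := aux_l2_mul_integrable hf hg
  have hq : ∀ t : ℝ, 0 ≤ (∫ x, g x ^ 2 ∂μ) * (t * t) + (2 * ∫ x, f x * g x ∂μ) * t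
      + ∫ x, f x ^ 2 ∂μ := by
    intro t
    have h0 : 0 ≤ ∫ x, (f x + t * g x) ^ 2 ∂μ := integral_nonneg fun x => sq_nonneg _
    have hfgc : Integrable (fun x => (2 * t) * (f x * g x)) μ := hfg.const_mul _
    have hg2c : Integrable (fun x => (t * t) * g x ^ 2) μ := hg2.const_mul _
    have hA : Integrable (fun x => f x ^ 2 + (2 * t) * (f x * g x)) μ := hf2.add hfgc
    have he : (fun x => (f x + t * g x) ^ 2)
        = fun x => (f x ^ 2 + (2 * t) * (f x * g x)) + (t * t) * g x ^ 2 :=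
      funext fun x => by ring
    rw [he, integral_add hA hg2c, integral_add hf2 hfgc, integral_const_mul,
      integral_const_mul] at h0
    nlinarith [h0]
  have hd := discrim_le_zero hq
  rw [discrim] at hd
  have hb : (∫ x, f x * g x ∂μ) ^ 2 ≤ (∫ x, f x ^ 2 ∂μ) * (∫ x, g x ^ 2 ∂μ) := by nlinarith [hd]
  calc |∫ x, f x * g x ∂μ| = Real.sqrt ((∫ x, f x * g x ∂μ) ^ 2) := (Real.sqrt_sq_eq_abs _).symm
    _ ≤ Real.sqrt ((∫ x, f x ^ 2 ∂μ) * (∫ x, g x ^ 2 ∂μ)) := Real.sqrt_le_sqrt hb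
    _ = Real.sqrt (∫ x, f x ^ 2 ∂μ) * Real.sqrt (∫ x, g x ^ 2 ∂μ) :=
      Real.sqrt_mul (integral_nonneg fun x => sq_nonneg _) _

/-- Under hypothesis (H3) on an algebra `𝒟` of bounded measurable functions,
dense in `L²(P_Y)`, containing the constants, the form
`ℰ(φ,χ) = lim (α_n/2) 𝔼[(φ(Y_n)−φ(Y))(χ(Y_n)−χ(Y))] = −∫ Ã[φ] χ dP_Y`
is positive on `𝒟` and closable in `L²(P_Y)`. -/
theorem H3_gives_positive_closable_form
    {Ω E : Type*} [MeasurableSpace Ω] [MeasurableSpace E]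
    (P : Measure Ω) [IsProbabilityMeasure P]
    (Y : Ω → E) (Yn : ℕ → Ω → E) (hY : Measurable Y) (hYn : ∀ n, Measurable (Yn n))
    (α : ℕ → ℝ) (hα : ∀ n, 0 < α n)
    (𝒟 : Set (E → ℝ))
    (h_meas : ∀ φ ∈ 𝒟, Measurable φ)
    (h_bdd : ∀ φ ∈ 𝒟, ∃ C : ℝ, ∀ x, |φ x| ≤ C)
    (h_add : ∀ φ ∈ 𝒟, ∀ χ ∈ 𝒟, φ + χ ∈ 𝒟)
    (h_smul : ∀ c : ℝ, ∀ φ ∈ 𝒟, c • φ ∈ 𝒟)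
    (h_mul : ∀ φ ∈ 𝒟, ∀ χ ∈ 𝒟, φ * χ ∈ 𝒟)
    (h_const : ∀ c : ℝ, (fun _ => c) ∈ 𝒟)
    (h_dense : ∀ f : E → ℝ, MemLp f 2 (Measure.map Y P) → ∀ ε : ℝ, 0 < ε →
      ∃ φ ∈ 𝒟, eLpNorm (f - φ) 2 (Measure.map Y P) < ENNReal.ofReal ε)
    (Atil : (E → ℝ) → (E → ℝ))
    (hAtilL2 : ∀ φ ∈ 𝒟, MemLp (Atil φ) 2 (Measure.map Y P))
    (hH3 : ∀ φ ∈ 𝒟, ∀ χ ∈ 𝒟,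
      Tendsto (fun n => α n * ∫ ω, (φ (Yn n ω) - φ (Y ω)) * (χ (Yn n ω) - χ (Y ω)) ∂P)
        atTop (𝓝 (-2 * ∫ x, Atil φ x * χ x ∂(Measure.map Y P)))) :
    (∀ φ ∈ 𝒟, 0 ≤ -∫ x, Atil φ x * φ x ∂(Measure.map Y P)) ∧
    (∀ φ : ℕ → E → ℝ, (∀ k, φ k ∈ 𝒟) →
      Tendsto (fun k => ∫ x, φ k x ^ 2 ∂(Measure.map Y P)) atTop (𝓝 0) →
      (∀ ε : ℝ, 0 < ε → ∃ N : ℕ, ∀ k ≥ N, ∀ l ≥ N,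
        -∫ x, Atil (φ k - φ l) x * (φ k x - φ l x) ∂(Measure.map Y P) < ε) →
      Tendsto (fun k => -∫ x, Atil (φ k) x * φ k x ∂(Measure.map Y P)) atTop (𝓝 0)) := by
  set μ := Measure.map Y P with hμ
  haveI : IsProbabilityMeasure μ := by
    rw [hμ]; exact Measure.isProbabilityMeasure_map hY.aemeasurable
  -- members of 𝒟 are in L²
  have hD2 : ∀ φ ∈ 𝒟, MemLp φ 2 μ := by
    intro φ hφ
    obtain ⟨C, hC⟩ := h_bdd φ hφ
    exact MemLp.of_bound (h_meas φ hφ).aestronglyMeasurable C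
      (ae_of_all _ fun x => by simpa [Real.norm_eq_abs] using hC x)
  -- 𝒟 is closed under subtraction
  have h_sub : ∀ φ ∈ 𝒟, ∀ χ ∈ 𝒟, φ - χ ∈ 𝒟 := by
    intro φ hφ χ hχ
    have h := h_add φ hφ _ (h_smul (-1) χ hχ)
    have he : φ + (-1 : ℝ) • χ = φ - χ := by
      funext x; simp [sub_eq_add_neg]
    rwa [he] at h
  -- symmetry of the form
  have hsymm : ∀ φ ∈ 𝒟, ∀ χ ∈ 𝒟,
      ∫ x, Atil φ x * χ x ∂μ = ∫ x, Atil χ x * φ x ∂μ := by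
    intro φ hφ χ hχ
    have h1 := hH3 φ hφ χ hχ
    have h2 := hH3 χ hχ φ hφ
    have heq : (fun n => α n * ∫ ω, (χ (Yn n ω) - χ (Y ω)) * (φ (Yn n ω) - φ (Y ω)) ∂P)
        = fun n => α n * ∫ ω, (φ (Yn n ω) - φ (Y ω)) * (χ (Yn n ω) - χ (Y ω)) ∂P := by
      funext n
      congr 1
      congr 1
      funext ω
      ring
    rw [heq] at h2
    have := tendsto_nhds_unique h1 h2
    linarith
  -- positivity of the form
  have hpos : ∀ φ ∈ 𝒟, 0 ≤ -∫ x, Atil φ x * φ x ∂μ := by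
    intro φ hφ
    have h1 := hH3 φ hφ φ hφ
    have h2 : (0 : ℝ) ≤ -2 * ∫ x, Atil φ x * φ x ∂μ :=
      ge_of_tendsto' h1 fun n =>
        mul_nonneg (hα n).le (integral_nonneg fun ω => mul_self_nonneg _)
    linarith
  -- splitting integrals linearly in the second argument
  have hsplit : ∀ f : E → ℝ, MemLp f 2 μ → ∀ g h : E → ℝ, MemLp g 2 μ → MemLp h 2 μ →
      ∀ t : ℝ, ∫ x, f x * (g x + t * h x) ∂μ
        = ∫ x, f x * g x ∂μ + t * ∫ x, f x * h x ∂μ := by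
    intro f hf g h hg hh t
    have h1 : Integrable (fun x => f x * g x) μ := aux_l2_mul_integrable hf hg
    have h2 : Integrable (fun x => f x * h x) μ := aux_l2_mul_integrable hf hh
    have h2c : Integrable (fun x => t * (f x * h x)) μ := h2.const_mul t
    have he : (fun x => f x * (g x + t * h x)) = fun x => f x * g x + t * (f x * h x) :=
      funext fun x => by ring
    rw [he, integral_add h1 h2c, integral_const_mul]
  -- Cauchy–Schwarz for the form
  have hcs : ∀ φ ∈ 𝒟, ∀ χ ∈ 𝒟,
      (∫ x, Atil φ x * χ x ∂μ) ^ 2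
        ≤ (-∫ x, Atil φ x * φ x ∂μ) * (-∫ x, Atil χ x * χ x ∂μ) := by
    intro φ hφ χ hχ
    have hq : ∀ t : ℝ, 0 ≤ (-∫ x, Atil χ x * χ x ∂μ) * (t * t)
        + (-2 * ∫ x, Atil φ x * χ x ∂μ) * t + (-∫ x, Atil φ x * φ x ∂μ) := by
      intro t
      have hψm : φ + t • χ ∈ 𝒟 := h_add φ hφ _ (h_smul t χ hχ)
      have h0 := hpos _ hψm
      have happ : ∀ x, (φ + t • χ) x = φ x + t * χ x := fun x => rfl
      have hψ2 : MemLp (fun x => φ x + t * χ x) 2 μ := by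
        have := hD2 _ hψm
        exact this
      have e1 : ∫ x, Atil (φ + t • χ) x * (φ + t • χ) x ∂μ
          = ∫ x, Atil (φ + t • χ) x * φ x ∂μ + t * ∫ x, Atil (φ + t • χ) x * χ x ∂μ := by
        have hs := hsplit (Atil (φ + t • χ)) (hAtilL2 _ hψm) φ χ (hD2 φ hφ) (hD2 χ hχ) t
        simp only [happ]
        exact hs
      have e2 : ∫ x, Atil (φ + t • χ) x * φ x ∂μ
          = ∫ x, Atil φ x * φ x ∂μ + t * ∫ x, Atil φ x * χ x ∂μ := by
        rw [hsymm _ hψm φ hφ]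
        have hs := hsplit (Atil φ) (hAtilL2 φ hφ) φ χ (hD2 φ hφ) (hD2 χ hχ) t
        simp only [happ]
        exact hs
      have e3 : ∫ x, Atil (φ + t • χ) x * χ x ∂μ
          = ∫ x, Atil φ x * χ x ∂μ + t * ∫ x, Atil χ x * χ x ∂μ := by
        rw [hsymm _ hψm χ hχ]
        have hs := hsplit (Atil χ) (hAtilL2 χ hχ) φ χ (hD2 φ hφ) (hD2 χ hχ) t
        simp only [happ]
        rw [hs, hsymm χ hχ φ hφ]
      rw [e1, e2, e3] at h0
      nlinarith [h0]
    have hd := discrim_le_zero hq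
    rw [discrim] at hd
    nlinarith [hd]
  constructor
  · exact hpos
  · intro φs hmem hL2 hCauchy
    rw [Metric.tendsto_atTop]
    intro ε hε
    obtain ⟨N, hN⟩ := hCauchy (ε / 2) (by positivity)
    refine ⟨N, fun k hk => ?_⟩
    rw [Real.dist_eq, sub_zero, abs_of_nonneg (hpos _ (hmem k))]
    set e : ℕ → ℝ := fun j => -∫ x, Atil (φs j) x * φs j x ∂μ with hedef
    have hek : 0 ≤ e k := hpos _ (hmem k)
    -- key inequality for l ≥ N
    have hkey : ∀ l ≥ N, e k ≤ (-∫ x, Atil (φs k) x * φs l x ∂μ)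
        + Real.sqrt (e k) * Real.sqrt (ε / 2) := by
      intro l hl
      have hdm : φs k - φs l ∈ 𝒟 := h_sub _ (hmem k) _ (hmem l)
      have hdd : 0 ≤ -∫ x, Atil (φs k - φs l) x * (φs k x - φs l x) ∂μ := by
        have := hpos _ hdm
        simpa [Pi.sub_apply] using this
      have hddlt : -∫ x, Atil (φs k - φs l) x * (φs k x - φs l x) ∂μ < ε / 2 := hN k hk l hl
      -- split e k
      have hb : Integrable (fun x => Atil (φs k) x * φs l x) μ :=
        aux_l2_mul_integrable (hAtilL2 _ (hmem k)) (hD2 _ (hmem l))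
      have hc : Integrable (fun x => Atil (φs k) x * (φs k x - φs l x)) μ :=
        aux_l2_mul_integrable (hAtilL2 _ (hmem k)) ((hD2 _ (hmem k)).sub (hD2 _ (hmem l)))
      have hsplit2 : ∫ x, Atil (φs k) x * φs k x ∂μ
          = ∫ x, Atil (φs k) x * φs l x ∂μ + ∫ x, Atil (φs k) x * (φs k x - φs l x) ∂μ := by
        rw [← integral_add hb hc]
        congr 1
        funext x
        ring
      -- bound the cross term via Cauchy–Schwarz for the form
      have hcs' := hcs (φs k) (hmem k) (φs k - φs l) hdm
      simp only [Pi.sub_apply] at hcs'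
      have habs : |∫ x, Atil (φs k) x * (φs k x - φs l x) ∂μ|
          ≤ Real.sqrt (e k) * Real.sqrt (-∫ x, Atil (φs k - φs l) x * (φs k x - φs l x) ∂μ) := by
        have h1 : |∫ x, Atil (φs k) x * (φs k x - φs l x) ∂μ|
            = Real.sqrt ((∫ x, Atil (φs k) x * (φs k x - φs l x) ∂μ) ^ 2) :=
          (Real.sqrt_sq_eq_abs _).symm
        rw [h1, ← Real.sqrt_mul hek]
        exact Real.sqrt_le_sqrt hcs'
      have hsq : Real.sqrt (-∫ x, Atil (φs k - φs l) x * (φs k x - φs l x) ∂μ)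
          ≤ Real.sqrt (ε / 2) := Real.sqrt_le_sqrt hddlt.le
      have : -∫ x, Atil (φs k) x * (φs k x - φs l x) ∂μ
          ≤ Real.sqrt (e k) * Real.sqrt (ε / 2) := by
        calc -∫ x, Atil (φs k) x * (φs k x - φs l x) ∂μ
            ≤ |∫ x, Atil (φs k) x * (φs k x - φs l x) ∂μ| := neg_le_abs _
          _ ≤ Real.sqrt (e k) * Real.sqrt (-∫ x, Atil (φs k - φs l) x * (φs k x - φs l x) ∂μ) := habs
          _ ≤ Real.sqrt (e k) * Real.sqrt (ε / 2) :=
            mul_le_mul_of_nonneg_left hsq (Real.sqrt_nonneg _)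
      have : e k = (-∫ x, Atil (φs k) x * φs l x ∂μ)
          + (-∫ x, Atil (φs k) x * (φs k x - φs l x) ∂μ) := by
        rw [hedef]; simp only []
        rw [hsplit2]; ring
      linarith [this, ‹-∫ x, Atil (φs k) x * (φs k x - φs l x) ∂μ
          ≤ Real.sqrt (e k) * Real.sqrt (ε / 2)›]
    -- the first term tends to 0 as l → ∞
    have hlim : Tendsto (fun l => -∫ x, Atil (φs k) x * φs l x ∂μ) atTop (𝓝 0) := by
      apply squeeze_zero_norm (a := fun l =>
        Real.sqrt (∫ x, Atil (φs k) x ^ 2 ∂μ) * Real.sqrt (∫ x, φs l x ^ 2 ∂μ))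
      · intro l
        rw [Real.norm_eq_abs, abs_neg]
        exact aux_integral_cs (hAtilL2 _ (hmem k)) (hD2 _ (hmem l))
      · have hsq : Tendsto (fun l => Real.sqrt (∫ x, φs l x ^ 2 ∂μ)) atTop (𝓝 0) := by
          have := (Real.continuous_sqrt.tendsto 0).comp hL2
          simpa [Function.comp_def] using this
        have := hsq.const_mul (Real.sqrt (∫ x, Atil (φs k) x ^ 2 ∂μ))
        simpa using this
    -- conclude e k ≤ sqrt(e k) * sqrt(ε/2)
    have hfin : e k ≤ Real.sqrt (e k) * Real.sqrt (ε / 2) := by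
      have htend : Tendsto (fun l => (-∫ x, Atil (φs k) x * φs l x ∂μ)
          + Real.sqrt (e k) * Real.sqrt (ε / 2)) atTop
          (𝓝 (0 + Real.sqrt (e k) * Real.sqrt (ε / 2))) := hlim.add tendsto_const_nhds
      have := ge_of_tendsto htend (eventually_atTop.mpr ⟨N, hkey⟩)
      linarith
    -- deduce e k ≤ ε/2 < ε
    have h1 : Real.sqrt (e k) ^ 2 = e k := Real.sq_sqrt hek
    have h2 : Real.sqrt (ε / 2) ^ 2 = ε / 2 := Real.sq_sqrt (by positivity)
    show e k < ε
    clear_value e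
    nlinarith [hfin, h1, h2, Real.sqrt_nonneg (e k), Real.sqrt_nonneg (ε / 2),
      sq_nonneg (Real.sqrt (e k) - Real.sqrt (ε / 2)), hε]
end

section
/- Let Y, Y_n (n ∈ ℕ) be measurable maps from a probability space (Ω, 𝒜, ℙ) to a measurable space (E, ℱ), P_Y the law of Y, α_n positive reals, and 𝒟 an algebra of bounded measurable real functions on E containing the constants and dense in L²(P_Y). Assume hypothesis (H3): for each φ ∈ 𝒟 there exists Ã[φ] ∈ L²(P_Y) such that for all χ ∈ 𝒟, α_n 𝔼[(φ(Y_n) − φ(Y))(χ(Y_n) − χ(Y))] → −2 ∫ Ã[φ] χ dP_Y. Then the associated square field operator Γ[φ] := Ã[φ²] − 2φ Ã[φ] satisfies, for all φ, χ ∈ 𝒟, lim_n α_n 𝔼[ (φ(Y_n) − φ(Y))² (χ(Y_n) + χ(Y))/2 ] = ∫ Γ[φ] χ dP_Y. -/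
open MeasureTheory Filter Set
open scoped Topology

/-- Under hypothesis (H3) on an algebra `𝒟` of bounded measurable functions,
dense in `L²(P_Y)` and containing the constants, the square field operator
`Γ[φ] = Ã[φ²] − 2φÃ[φ]` satisfies, for all `φ, χ ∈ 𝒟`,
`lim α_n 𝔼[(φ(Y_n) − φ(Y))² (χ(Y_n) + χ(Y))/2] = ∫ Γ[φ] χ dP_Y`. -/
theorem H3_square_field_operator
    {Ω E : Type*} [MeasurableSpace Ω] [MeasurableSpace E]
    (P : Measure Ω) [IsProbabilityMeasure P]
    (Y : Ω → E) (Yn : ℕ → Ω → E) (hY : Measurable Y) (hYn : ∀ n, Measurable (Yn n))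
    (α : ℕ → ℝ) (hα : ∀ n, 0 < α n)
    (𝒟 : Set (E → ℝ))
    (h_meas : ∀ φ ∈ 𝒟, Measurable φ)
    (h_bdd : ∀ φ ∈ 𝒟, ∃ C : ℝ, ∀ x, |φ x| ≤ C)
    (h_add : ∀ φ ∈ 𝒟, ∀ χ ∈ 𝒟, φ + χ ∈ 𝒟)
    (h_smul : ∀ c : ℝ, ∀ φ ∈ 𝒟, c • φ ∈ 𝒟)
    (h_mul : ∀ φ ∈ 𝒟, ∀ χ ∈ 𝒟, φ * χ ∈ 𝒟)
    (h_const : ∀ c : ℝ, (fun _ => c) ∈ 𝒟)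
    (h_dense : ∀ f : E → ℝ, MemLp f 2 (Measure.map Y P) → ∀ ε : ℝ, 0 < ε →
      ∃ φ ∈ 𝒟, eLpNorm (f - φ) 2 (Measure.map Y P) < ENNReal.ofReal ε)
    (Atil : (E → ℝ) → (E → ℝ))
    (hAtilL2 : ∀ φ ∈ 𝒟, MemLp (Atil φ) 2 (Measure.map Y P))
    (hH3 : ∀ φ ∈ 𝒟, ∀ χ ∈ 𝒟,
      Tendsto (fun n => α n * ∫ ω, (φ (Yn n ω) - φ (Y ω)) * (χ (Yn n ω) - χ (Y ω)) ∂P)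
        atTop (𝓝 (-2 * ∫ x, Atil φ x * χ x ∂(Measure.map Y P)))) :
    ∀ φ ∈ 𝒟, ∀ χ ∈ 𝒟,
      Tendsto (fun n =>
          α n * ∫ ω, (φ (Yn n ω) - φ (Y ω)) ^ 2 * ((χ (Yn n ω) + χ (Y ω)) / 2) ∂P)
        atTop
        (𝓝 (∫ x, (Atil (φ * φ) x - 2 * φ x * Atil φ x) * χ x ∂(Measure.map Y P))) := by
  intro φ hφ χ hχ
  have hφχ : φ * χ ∈ 𝒟 := h_mul φ hφ χ hχ
  have hφφ : φ * φ ∈ 𝒟 := h_mul φ hφ φ hφ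
  -- integrability of the bounded measurable integrands
  have hint : ∀ ψ ∈ 𝒟, ∀ ξ ∈ 𝒟, ∀ n : ℕ,
      Integrable (fun ω => (ψ (Yn n ω) - ψ (Y ω)) * (ξ (Yn n ω) - ξ (Y ω))) P := by
    intro ψ hψ ξ hξ n
    obtain ⟨C, hC⟩ := h_bdd ψ hψ
    obtain ⟨D, hD⟩ := h_bdd ξ hξ
    have hm : Measurable fun ω => (ψ (Yn n ω) - ψ (Y ω)) * (ξ (Yn n ω) - ξ (Y ω)) := by
      exact (((h_meas ψ hψ).comp (hYn n)).sub ((h_meas ψ hψ).comp hY)).mul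
        (((h_meas ξ hξ).comp (hYn n)).sub ((h_meas ξ hξ).comp hY))
    refine (integrable_const ((C + C) * (D + D))).mono' hm.aestronglyMeasurable
      (ae_of_all _ fun ω => ?_)
    have h1 : |ψ (Yn n ω) - ψ (Y ω)| ≤ C + C :=
      (abs_sub _ _).trans (add_le_add (hC _) (hC _))
    have h2 : |ξ (Yn n ω) - ξ (Y ω)| ≤ D + D :=
      (abs_sub _ _).trans (add_le_add (hD _) (hD _))
    calc ‖(ψ (Yn n ω) - ψ (Y ω)) * (ξ (Yn n ω) - ξ (Y ω))‖
        = |ψ (Yn n ω) - ψ (Y ω)| * |ξ (Yn n ω) - ξ (Y ω)| := by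
          rw [Real.norm_eq_abs, abs_mul]
      _ ≤ (C + C) * (D + D) := by
          apply mul_le_mul h1 h2 (abs_nonneg _)
          exact le_trans (abs_nonneg _) h1
  -- the two H3 limits
  have h1 := hH3 φ hφ (φ * χ) hφχ
  have h2 := hH3 (φ * φ) hφφ χ hχ
  -- combine
  have key : ∀ n, α n * ∫ ω, (φ (Yn n ω) - φ (Y ω)) ^ 2 * ((χ (Yn n ω) + χ (Y ω)) / 2) ∂P
      = (α n * ∫ ω, (φ (Yn n ω) - φ (Y ω)) * ((φ * χ) (Yn n ω) - (φ * χ) (Y ω)) ∂P)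
        - (1 / 2) * (α n * ∫ ω, ((φ * φ) (Yn n ω) - (φ * φ) (Y ω)) * (χ (Yn n ω) - χ (Y ω)) ∂P) := by
    intro n
    have heq : (fun ω => (φ (Yn n ω) - φ (Y ω)) ^ 2 * ((χ (Yn n ω) + χ (Y ω)) / 2))
        = fun ω => (φ (Yn n ω) - φ (Y ω)) * ((φ * χ) (Yn n ω) - (φ * χ) (Y ω))
          - (1 / 2) * (((φ * φ) (Yn n ω) - (φ * φ) (Y ω)) * (χ (Yn n ω) - χ (Y ω))) := by
      funext ω
      simp only [Pi.mul_apply]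
      ring
    rw [heq, integral_sub (hint φ hφ (φ * χ) hφχ n)
      (((hint (φ * φ) hφφ χ hχ n)).const_mul (1 / 2)), integral_const_mul]
    ring
  have hlim : Tendsto (fun n =>
      (α n * ∫ ω, (φ (Yn n ω) - φ (Y ω)) * ((φ * χ) (Yn n ω) - (φ * χ) (Y ω)) ∂P)
        - (1 / 2) * (α n * ∫ ω, ((φ * φ) (Yn n ω) - (φ * φ) (Y ω)) * (χ (Yn n ω) - χ (Y ω)) ∂P))
      atTop (𝓝 ((-2 * ∫ x, Atil φ x * (φ * χ) x ∂(Measure.map Y P))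
        - (1 / 2) * (-2 * ∫ x, Atil (φ * φ) x * χ x ∂(Measure.map Y P)))) :=
    h1.sub (h2.const_mul (1 / 2))
  -- identify the limit with the target integral
  have hintA : ∀ ψ ∈ 𝒟, ∀ ξ ∈ 𝒟,
      Integrable (fun x => Atil ψ x * ξ x) (Measure.map Y P) := by
    intro ψ hψ ξ hξ
    obtain ⟨D, hD⟩ := h_bdd ξ hξ
    have hI : Integrable (Atil ψ) (Measure.map Y P) :=
      (hAtilL2 ψ hψ).integrable one_le_two
    have := hI.bdd_mul ((h_meas ξ hξ).aestronglyMeasurable) (c := D) (ae_of_all _ fun x => by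
      rw [Real.norm_eq_abs]; exact hD x)
    simpa [mul_comm] using this
  have htarget : (∫ x, (Atil (φ * φ) x - 2 * φ x * Atil φ x) * χ x ∂(Measure.map Y P))
      = (-2 * ∫ x, Atil φ x * (φ * χ) x ∂(Measure.map Y P))
        - (1 / 2) * (-2 * ∫ x, Atil (φ * φ) x * χ x ∂(Measure.map Y P)) := by
    have heq : (fun x => (Atil (φ * φ) x - 2 * φ x * Atil φ x) * χ x)
        = fun x => Atil (φ * φ) x * χ x - 2 * (Atil φ x * (φ * χ) x) := by
      funext x; simp only [Pi.mul_apply]; ring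
    rw [heq, integral_sub (hintA (φ * φ) hφφ χ hχ)
      ((hintA φ hφ (φ * χ) hφχ).const_mul 2), integral_const_mul]
    ring
  rw [htarget]
  exact hlim.congr fun n => (key n).symm
end

section
/- Let Y, Y_n (n ∈ ℕ) be measurable maps from a probability space (Ω, 𝒜, ℙ) to a measurable space (E, ℱ), P_Y the law of Y, α_n positive reals, and 𝒟 an algebra of bounded measurable real functions on E containing the constants and dense in L²(P_Y). Assume that for each φ ∈ 𝒟 there exist functions Ā[φ], A̲[φ] ∈ L²(P_Y) such that for all χ ∈ 𝒟: α_n 𝔼[(φ(Y_n) − φ(Y)) χ(Y)] → ∫ Ā[φ] χ dP_Y (hypothesis H1) and α_n 𝔼[(φ(Y) − φ(Y_n)) χ(Y_n)] → ∫ A̲[φ] χ dP_Y (hypothesis H2), and set Ⱥ[φ] := (Ā[φ] − A̲[φ])/2. Assume moreover there exists a real p ≥ 1 such that for all φ, ψ ∈ 𝒟, α_n 𝔼[(φ(Y_n) − φ(Y))² |ψ(Y_n) − ψ(Y)|^p] → 0. Then Ⱥ is a first order operator: for all φ, χ ∈ 𝒟, Ⱥ[φχ] = Ⱥ[φ] χ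 + φ Ⱥ[χ] holds P_Y-almost everywhere. -/
open MeasureTheory Filter Set
open scoped Topology ENNReal

private lemma sbofo_abs_mul_le {a b A B : ℝ} (ha : |a| ≤ A) (hb : |b| ≤ B) : |a * b| ≤ A * B := by
  rw [abs_mul]
  exact mul_le_mul ha hb (abs_nonneg _) ((abs_nonneg a).trans ha)

private lemma sbofo_abs_sub_le {a b C : ℝ} (ha : |a| ≤ C) (hb : |b| ≤ C) : |a - b| ≤ 2 * C := by
  have := abs_sub a b
  linarith

private lemma sbofo_integrable {Ω : Type*} [MeasurableSpace Ω] {P : Measure Ω}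
    [IsFiniteMeasure P] {f : Ω → ℝ} (hf : Measurable f) {C : ℝ} (h : ∀ ω, |f ω| ≤ C) :
    Integrable f P :=
  (memLp_top_of_bound hf.aestronglyMeasurable C (ae_of_all _ fun ω => by
      simpa [Real.norm_eq_abs] using h ω)).integrable le_top

private lemma sbofo_shape {Ω E : Type*} [MeasurableSpace Ω] [MeasurableSpace E]
    {P : Measure Ω} [IsProbabilityMeasure P] {Y Z : Ω → E}
    (hY : Measurable Y) (hZ : Measurable Z) {f g : E → ℝ}
    (hf : Measurable f) (hg : Measurable g) {Cf Cg : ℝ}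
    (hCf : ∀ x, |f x| ≤ Cf) (hCg : ∀ x, |g x| ≤ Cg) :
    Integrable (fun ω => (f (Z ω) - f (Y ω)) * g (Y ω)) P := by
  refine sbofo_integrable (((hf.comp hZ).sub (hf.comp hY)).mul (hg.comp hY))
    (C := (2 * Cf) * Cg) fun ω => ?_
  exact sbofo_abs_mul_le (sbofo_abs_sub_le (hCf _) (hCf _)) (hCg _)

private lemma sbofo_pt {t δ p : ℝ} (ht : 0 ≤ t) (hδ : 0 < δ) (hp : 1 ≤ p) :
    t ≤ δ + δ ^ (1 - p) * t ^ p := by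
  rcases le_or_gt t δ with h | h
  · have h0 : 0 ≤ δ ^ (1 - p) * t ^ p :=
      mul_nonneg (Real.rpow_nonneg hδ.le _) (Real.rpow_nonneg ht _)
    linarith
  · have htpos : 0 < t := hδ.trans h
    have h1 : (1:ℝ) ≤ (t / δ) ^ (p - 1) := by
      apply Real.one_le_rpow ?_ (by linarith)
      rw [le_div_iff₀ hδ]; linarith
    have h3 : t ^ p = t * t ^ (p - 1) := by
      have h := Real.rpow_add htpos 1 (p - 1)
      rw [Real.rpow_one] at h
      rw [show (1 : ℝ) + (p - 1) = p by ring] at h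
      exact h
    have h4 : δ ^ (1 - p) = (δ ^ (p - 1))⁻¹ := by
      rw [show (1 - p : ℝ) = -(p - 1) by ring, Real.rpow_neg hδ.le]
    have h5 : (0:ℝ) < δ ^ (p - 1) := Real.rpow_pos_of_pos hδ _
    have h2 : δ ^ (1 - p) * t ^ p = t * (t / δ) ^ (p - 1) := by
      rw [Real.div_rpow ht hδ.le, h3, h4]
      field_simp
    calc t = t * 1 := (mul_one t).symm
      _ ≤ t * ((t / δ) ^ (p - 1)) := mul_le_mul_of_nonneg_left h1 htpos.le
      _ = δ ^ (1 - p) * t ^ p := h2.symm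
      _ ≤ δ + δ ^ (1 - p) * t ^ p := le_add_of_nonneg_left hδ.le

private lemma sbofo_memL2_mul {E : Type*} [MeasurableSpace E] {μ : Measure E} {f g : E → ℝ}
    (hf : MemLp f 2 μ) (hg : Measurable g) {C : ℝ} (hC : ∀ x, |g x| ≤ C) :
    MemLp (fun x => f x * g x) 2 μ := by
  refine hf.of_le_mul (c := C) (hf.aestronglyMeasurable.mul hg.aestronglyMeasurable)
    (ae_of_all _ fun x => ?_)
  simp only [Real.norm_eq_abs, abs_mul]
  calc |f x| * |g x| ≤ |f x| * C := mul_le_mul_of_nonneg_left (hC x) (abs_nonneg _)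
    _ = C * |f x| := mul_comm _ _

private lemma sbofo_memL2_mul' {E : Type*} [MeasurableSpace E] {μ : Measure E} {f g : E → ℝ}
    (hf : MemLp f 2 μ) (hg : Measurable g) {C : ℝ} (hC : ∀ x, |g x| ≤ C) :
    MemLp (fun x => g x * f x) 2 μ := by
  have h := sbofo_memL2_mul hf hg hC
  exact h.ae_eq (ae_of_all _ fun x => mul_comm (f x) (g x))

private lemma sbofo_key {Ω E : Type*} [MeasurableSpace Ω] [MeasurableSpace E]
    {P : Measure Ω} [IsProbabilityMeasure P] {Y : Ω → E} {Yn : ℕ → Ω → E}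
    (hY : Measurable Y) (hYn : ∀ n, Measurable (Yn n))
    {α : ℕ → ℝ} (hα : ∀ n, 0 < α n) {f g : E → ℝ}
    (hf : Measurable f) (hg : Measurable g) {Cf Cg : ℝ}
    (hCf : ∀ x, |f x| ≤ Cf) (hCg : ∀ x, |g x| ≤ Cg)
    {p : ℝ} (hp : 1 ≤ p) {L : ℝ}
    (hL : Tendsto (fun n => α n * ∫ ω, (f (Yn n ω) - f (Y ω)) ^ 2 ∂P) atTop (𝓝 L))
    (hb : Tendsto (fun n => α n * ∫ ω, (f (Yn n ω) - f (Y ω)) ^ 2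
        * |g (Yn n ω) - g (Y ω)| ^ p ∂P) atTop (𝓝 0)) :
    Tendsto (fun n => α n * ∫ ω, (f (Yn n ω) - f (Y ω)) ^ 2
      * |g (Yn n ω) - g (Y ω)| ∂P) atTop (𝓝 0) := by
  have hp0 : (0:ℝ) ≤ p := by linarith
  -- measurability of building blocks
  have hfm : ∀ n, Measurable fun ω => f (Yn n ω) - f (Y ω) :=
    fun n => (hf.comp (hYn n)).sub (hf.comp hY)
  have hgm : ∀ n, Measurable fun ω => g (Yn n ω) - g (Y ω) :=
    fun n => (hg.comp (hYn n)).sub (hg.comp hY)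
  -- integrability
  have hIsq : ∀ n, Integrable (fun ω => (f (Yn n ω) - f (Y ω)) ^ 2) P := by
    intro n
    refine sbofo_integrable ((hfm n).pow_const 2) (C := (2 * Cf) ^ 2) fun ω => ?_
    rw [abs_pow]
    exact pow_le_pow_left₀ (abs_nonneg _) (sbofo_abs_sub_le (hCf _) (hCf _)) 2
  have hIabs : ∀ n, Integrable
      (fun ω => (f (Yn n ω) - f (Y ω)) ^ 2 * |g (Yn n ω) - g (Y ω)|) P := by
    intro n
    refine sbofo_integrable (((hfm n).pow_const 2).mul (hgm n).abs)
      (C := (2 * Cf) ^ 2 * (2 * Cg)) fun ω => ?_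
    refine sbofo_abs_mul_le ?_ ?_
    · rw [abs_pow]
      exact pow_le_pow_left₀ (abs_nonneg _) (sbofo_abs_sub_le (hCf _) (hCf _)) 2
    · rw [abs_abs]
      exact sbofo_abs_sub_le (hCg _) (hCg _)
  have hIp : ∀ n, Integrable
      (fun ω => (f (Yn n ω) - f (Y ω)) ^ 2 * |g (Yn n ω) - g (Y ω)| ^ p) P := by
    intro n
    refine sbofo_integrable (((hfm n).pow_const 2).mul
      ((Real.continuous_rpow_const hp0).measurable.comp (hgm n).abs))
      (C := (2 * Cf) ^ 2 * (2 * Cg) ^ p) fun ω => ?_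
    refine sbofo_abs_mul_le ?_ ?_
    · rw [abs_pow]
      exact pow_le_pow_left₀ (abs_nonneg _) (sbofo_abs_sub_le (hCf _) (hCf _)) 2
    · rw [abs_of_nonneg (Real.rpow_nonneg (abs_nonneg _) _)]
      exact Real.rpow_le_rpow (abs_nonneg _) (sbofo_abs_sub_le (hCg _) (hCg _)) hp0
  -- eventual bound for α n * ∫ Δf²
  set M : ℝ := max (|L| + 1) 1 with hMdef
  have hM1 : (1:ℝ) ≤ M := le_max_right _ _
  have hEvM : ∀ᶠ n in atTop, α n * ∫ ω, (f (Yn n ω) - f (Y ω)) ^ 2 ∂P ≤ M := by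
    have h1 : ∀ᶠ x in 𝓝 L, x ≤ |L| + 1 :=
      eventually_le_nhds (lt_of_le_of_lt (le_abs_self L) (lt_add_one _))
    exact (hL.eventually h1).mono fun n h => h.trans (le_max_left _ _)
  rw [Metric.tendsto_nhds]
  intro ε hε
  set δ : ℝ := ε / (2 * M) with hδdef
  have hδ : 0 < δ := div_pos hε (by linarith)
  have hδp : (0:ℝ) < δ ^ (p - 1) := Real.rpow_pos_of_pos hδ _
  have hδ1p : (0:ℝ) < δ ^ (1 - p) := Real.rpow_pos_of_pos hδ _
  have hr : (0:ℝ) < δ ^ (p - 1) * (ε / 2) := mul_pos hδp (by linarith)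
  have hbev : ∀ᶠ n in atTop,
      dist (α n * ∫ ω, (f (Yn n ω) - f (Y ω)) ^ 2 * |g (Yn n ω) - g (Y ω)| ^ p ∂P) 0
        < δ ^ (p - 1) * (ε / 2) := (Metric.tendsto_nhds.1 hb) _ hr
  filter_upwards [hEvM, hbev] with n hMn hbn
  have hαn := (hα n).le
  have hsnn : 0 ≤ α n * ∫ ω, (f (Yn n ω) - f (Y ω)) ^ 2 * |g (Yn n ω) - g (Y ω)| ∂P :=
    mul_nonneg hαn (integral_nonneg fun ω => mul_nonneg (sq_nonneg _) (abs_nonneg _))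
  have hbnn : 0 ≤ α n * ∫ ω, (f (Yn n ω) - f (Y ω)) ^ 2 * |g (Yn n ω) - g (Y ω)| ^ p ∂P :=
    mul_nonneg hαn (integral_nonneg fun ω =>
      mul_nonneg (sq_nonneg _) (Real.rpow_nonneg (abs_nonneg _) _))
  rw [Real.dist_eq, sub_zero, abs_of_nonneg hsnn]
  rw [Real.dist_eq, sub_zero, abs_of_nonneg hbnn] at hbn
  -- pointwise bound
  have hpt : ∀ ω, (f (Yn n ω) - f (Y ω)) ^ 2 * |g (Yn n ω) - g (Y ω)|
      ≤ δ * (f (Yn n ω) - f (Y ω)) ^ 2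
        + δ ^ (1 - p) * ((f (Yn n ω) - f (Y ω)) ^ 2 * |g (Yn n ω) - g (Y ω)| ^ p) := by
    intro ω
    have h := sbofo_pt (abs_nonneg (g (Yn n ω) - g (Y ω))) hδ hp
    nlinarith [sq_nonneg (f (Yn n ω) - f (Y ω)),
      Real.rpow_nonneg (abs_nonneg (g (Yn n ω) - g (Y ω))) p, hδ1p.le]
  have hmono : ∫ ω, (f (Yn n ω) - f (Y ω)) ^ 2 * |g (Yn n ω) - g (Y ω)| ∂P
      ≤ δ * (∫ ω, (f (Yn n ω) - f (Y ω)) ^ 2 ∂P)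
        + δ ^ (1 - p) * ∫ ω, (f (Yn n ω) - f (Y ω)) ^ 2 * |g (Yn n ω) - g (Y ω)| ^ p ∂P := by
    calc ∫ ω, (f (Yn n ω) - f (Y ω)) ^ 2 * |g (Yn n ω) - g (Y ω)| ∂P
        ≤ ∫ ω, (δ * (f (Yn n ω) - f (Y ω)) ^ 2
            + δ ^ (1 - p) * ((f (Yn n ω) - f (Y ω)) ^ 2 * |g (Yn n ω) - g (Y ω)| ^ p)) ∂P :=
          integral_mono (hIabs n) (((hIsq n).const_mul δ).add ((hIp n).const_mul _)) hpt
      _ = _ := by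
          rw [integral_add ((hIsq n).const_mul δ) ((hIp n).const_mul _),
            integral_const_mul, integral_const_mul]
  have h1 : α n * ∫ ω, (f (Yn n ω) - f (Y ω)) ^ 2 * |g (Yn n ω) - g (Y ω)| ∂P
      ≤ δ * (α n * ∫ ω, (f (Yn n ω) - f (Y ω)) ^ 2 ∂P)
        + δ ^ (1 - p) * (α n * ∫ ω, (f (Yn n ω) - f (Y ω)) ^ 2
            * |g (Yn n ω) - g (Y ω)| ^ p ∂P) := by
    have := mul_le_mul_of_nonneg_left hmono hαn
    nlinarith [this]
  have h2 : δ * (α n * ∫ ω, (f (Yn n ω) - f (Y ω)) ^ 2 ∂P) ≤ δ * M :=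
    mul_le_mul_of_nonneg_left hMn hδ.le
  have h3 : δ ^ (1 - p) * (α n * ∫ ω, (f (Yn n ω) - f (Y ω)) ^ 2
      * |g (Yn n ω) - g (Y ω)| ^ p ∂P) < δ ^ (1 - p) * (δ ^ (p - 1) * (ε / 2)) :=
    mul_lt_mul_of_pos_left hbn hδ1p
  have h4 : δ ^ (1 - p) * δ ^ (p - 1) = 1 := by
    rw [← Real.rpow_add hδ]; norm_num
  have h5 : δ * M = ε / 2 := by
    have hMne : M ≠ 0 := by linarith
    rw [hδdef]; field_simp
  have h6 : δ ^ (1 - p) * (δ ^ (p - 1) * (ε / 2)) = ε / 2 := by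
    rw [← mul_assoc, h4, one_mul]
  linarith

private lemma sbofo_ae_zero {E : Type*} [MeasurableSpace E] (μ : Measure E)
    [IsProbabilityMeasure μ] (𝒟 : Set (E → ℝ))
    (h_meas : ∀ φ ∈ 𝒟, Measurable φ)
    (h_bdd : ∀ φ ∈ 𝒟, ∃ C : ℝ, ∀ x, |φ x| ≤ C)
    (h_dense : ∀ f : E → ℝ, MemLp f 2 μ → ∀ ε : ℝ, 0 < ε →
      ∃ φ ∈ 𝒟, eLpNorm (f - φ) 2 μ < ENNReal.ofReal ε)
    {g : E → ℝ} (hg : MemLp g 2 μ)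
    (h0 : ∀ ψ ∈ 𝒟, ∫ x, g x * ψ x ∂μ = 0) : g =ᵐ[μ] 0 := by
  have hgi : Integrable (fun x => g x ^ 2) μ := hg.integrable_sq
  have hgint : Integrable g μ := hg.integrable one_le_two
  have htwo : (ENNReal.ofReal (2:ℝ)) = (2 : ℝ≥0∞) := by norm_num
  have hg2 : MemLp g (ENNReal.ofReal (2:ℝ)) μ := htwo ▸ hg
  have hconj : Real.HolderConjugate 2 2 := Real.holderConjugate_iff.mpr ⟨one_lt_two, by norm_num⟩
  set K : ℝ := (∫ x, ‖g x‖ ^ (2:ℝ) ∂μ) ^ (1/(2:ℝ)) with hK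
  have hKnn : 0 ≤ K :=
    Real.rpow_nonneg (integral_nonneg fun x => Real.rpow_nonneg (norm_nonneg _) _) _
  have key : ∫ x, g x ^ 2 ∂μ = 0 := by
    have hnn : 0 ≤ ∫ x, g x ^ 2 ∂μ := integral_nonneg fun x => sq_nonneg _
    refine le_antisymm (le_of_forall_pos_le_add fun ε hε => ?_) hnn
    have hδ : 0 < ε / (K + 1) := div_pos hε (by linarith)
    obtain ⟨ψ, hψD, hψ⟩ := h_dense g hg (ε / (K + 1)) hδ
    obtain ⟨Cψ, hCψ⟩ := h_bdd ψ hψD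
    have hψmeas := h_meas ψ hψD
    have hψmem : MemLp ψ 2 μ := by
      refine memLp_of_bounded (a := -Cψ) (b := Cψ) (ae_of_all _ fun x => ?_)
        hψmeas.aestronglyMeasurable 2
      exact abs_le.1 (hCψ x)
    have hgψ : Integrable (fun x => g x * ψ x) μ := by
      have := hgint.bdd_mul (c := Cψ) hψmeas.aestronglyMeasurable (ae_of_all _ fun x => by
        simpa [Real.norm_eq_abs] using hCψ x)
      simpa [mul_comm] using this
    have hsub : MemLp (g - ψ) 2 μ := hg.sub hψmem
    have hsub2 : MemLp (g - ψ) (ENNReal.ofReal (2:ℝ)) μ := htwo ▸ hsub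
    have hgsubψ : Integrable (fun x => g x * (g x - ψ x)) μ := by
      have h1 : Integrable (fun x => g x * g x - g x * ψ x) μ := by
        refine Integrable.sub ?_ hgψ
        simpa [sq] using hgi
      exact h1.congr (ae_of_all _ fun x => by ring)
    have hsplit : ∫ x, g x ^ 2 ∂μ = ∫ x, g x * (g x - ψ x) ∂μ := by
      calc ∫ x, g x ^ 2 ∂μ = ∫ x, (g x * (g x - ψ x) + g x * ψ x) ∂μ := by
            exact integral_congr_ae (ae_of_all _ fun x => by ring)
        _ = ∫ x, g x * (g x - ψ x) ∂μ + ∫ x, g x * ψ x ∂μ := integral_add hgsubψ hgψ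
        _ = ∫ x, g x * (g x - ψ x) ∂μ := by rw [h0 ψ hψD]; ring
    set T : ℝ := (∫ x, ‖(g - ψ) x‖ ^ (2:ℝ) ∂μ) ^ (1/(2:ℝ)) with hT
    have hTnn : 0 ≤ T :=
      Real.rpow_nonneg (integral_nonneg fun x => Real.rpow_nonneg (norm_nonneg _) _) _
    have hCS : ∫ x, g x * (g x - ψ x) ∂μ ≤ K * T := by
      have h1 : ∫ x, g x * (g x - ψ x) ∂μ ≤ ∫ x, ‖g x‖ * ‖(g - ψ) x‖ ∂μ := by
        refine integral_mono_ae hgsubψ ?_ (ae_of_all _ fun x => ?_)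
        · refine hgsubψ.abs.congr (ae_of_all _ fun x => ?_)
          simp [Real.norm_eq_abs, abs_mul, Pi.sub_apply]
        · have h2 : g x * (g x - ψ x) ≤ |g x * (g x - ψ x)| := le_abs_self _
          simpa [Real.norm_eq_abs, abs_mul, Pi.sub_apply] using h2
      exact h1.trans (integral_mul_norm_le_Lp_mul_Lq hconj hg2 hsub2)
    have hTlt : T < ε / (K + 1) := by
      have heq := hsub.eLpNorm_eq_integral_rpow_norm two_ne_zero ENNReal.ofNat_ne_top
      rw [heq] at hψ
      have htr : ((2:ℝ≥0∞)).toReal = (2:ℝ) := by norm_num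
      rw [htr] at hψ
      have h3 : ENNReal.ofReal T < ENNReal.ofReal (ε / (K + 1)) := by
        have hTe : T = (∫ a, ‖(g - ψ) a‖ ^ (2:ℝ) ∂μ) ^ ((2:ℝ)⁻¹) := by rw [hT, one_div]
        rw [hTe]; exact hψ
      exact (ENNReal.ofReal_lt_ofReal_iff hδ).1 h3
    have hfinal : K * T ≤ ε := by
      have h4 : K * T ≤ K * (ε / (K + 1)) := mul_le_mul_of_nonneg_left hTlt.le hKnn
      have hKK : K / (K + 1) ≤ 1 := (div_le_one (by linarith)).2 (by linarith)
      have h5 : K * (ε / (K + 1)) = ε * (K / (K + 1)) := by ring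
      have h6 : ε * (K / (K + 1)) ≤ ε * 1 := mul_le_mul_of_nonneg_left hKK hε.le
      linarith
    linarith [hsplit ▸ hCS]
  have hzero : (fun x => g x ^ 2) =ᵐ[μ] 0 :=
    (integral_eq_zero_iff_of_nonneg (fun x => sq_nonneg _) hgi).1 key
  filter_upwards [hzero] with x hx
  have hx2 : g x ^ 2 = 0 := hx
  simpa using pow_eq_zero_iff (two_ne_zero) |>.1 hx2

private lemma sbofo_int_sqabs {Ω E : Type*} [MeasurableSpace Ω] [MeasurableSpace E]
    {P : Measure Ω} [IsProbabilityMeasure P] {Y Z : Ω → E}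
    (hY : Measurable Y) (hZ : Measurable Z) {f g : E → ℝ}
    (hf : Measurable f) (hg : Measurable g) {Cf Cg : ℝ}
    (hCf : ∀ x, |f x| ≤ Cf) (hCg : ∀ x, |g x| ≤ Cg) :
    Integrable (fun ω => (f (Z ω) - f (Y ω)) ^ 2 * |g (Z ω) - g (Y ω)|) P := by
  refine sbofo_integrable
    ((((hf.comp hZ).sub (hf.comp hY)).pow_const 2).mul ((hg.comp hZ).sub (hg.comp hY)).abs)
    (C := (2 * Cf) ^ 2 * (2 * Cg)) fun ω => ?_
  refine sbofo_abs_mul_le ?_ ?_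
  · rw [abs_pow]
    exact pow_le_pow_left₀ (abs_nonneg _) (sbofo_abs_sub_le (hCf _) (hCf _)) 2
  · rw [abs_abs]
    exact sbofo_abs_sub_le (hCg _) (hCg _)

/-- Under hypotheses (H1) and (H2) on an algebra `𝒟` of bounded measurable
functions dense in `L²(P_Y)`, if moreover there is a real `p ≥ 1` such that
`α_n 𝔼[(φ(Y_n) − φ(Y))² |ψ(Y_n) − ψ(Y)|^p] → 0` for all `φ, ψ ∈ 𝒟`, then the singular
bias operator `Ⱥ = (Ā − A̲)/2` is first order: `Ⱥ[φχ] = Ⱥ[φ]χ + φⱤ[χ]` `P_Y`-a.e. -/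
theorem singular_bias_operator_first_order
    {Ω E : Type*} [MeasurableSpace Ω] [MeasurableSpace E]
    (P : Measure Ω) [IsProbabilityMeasure P]
    (Y : Ω → E) (Yn : ℕ → Ω → E) (hY : Measurable Y) (hYn : ∀ n, Measurable (Yn n))
    (α : ℕ → ℝ) (hα : ∀ n, 0 < α n)
    (𝒟 : Set (E → ℝ))
    (h_meas : ∀ φ ∈ 𝒟, Measurable φ)
    (h_bdd : ∀ φ ∈ 𝒟, ∃ C : ℝ, ∀ x, |φ x| ≤ C)
    (h_add : ∀ φ ∈ 𝒟, ∀ χ ∈ 𝒟, φ + χ ∈ 𝒟)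
    (h_smul : ∀ c : ℝ, ∀ φ ∈ 𝒟, c • φ ∈ 𝒟)
    (h_mul : ∀ φ ∈ 𝒟, ∀ χ ∈ 𝒟, φ * χ ∈ 𝒟)
    (h_const : ∀ c : ℝ, (fun _ => c) ∈ 𝒟)
    (h_dense : ∀ f : E → ℝ, MemLp f 2 (Measure.map Y P) → ∀ ε : ℝ, 0 < ε →
      ∃ φ ∈ 𝒟, eLpNorm (f - φ) 2 (Measure.map Y P) < ENNReal.ofReal ε)
    (Abar Alow : (E → ℝ) → (E → ℝ))
    (hAbarL2 : ∀ φ ∈ 𝒟, MemLp (Abar φ) 2 (Measure.map Y P))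
    (hAlowL2 : ∀ φ ∈ 𝒟, MemLp (Alow φ) 2 (Measure.map Y P))
    (hH1 : ∀ φ ∈ 𝒟, ∀ χ ∈ 𝒟,
      Tendsto (fun n => α n * ∫ ω, (φ (Yn n ω) - φ (Y ω)) * χ (Y ω) ∂P)
        atTop (𝓝 (∫ x, Abar φ x * χ x ∂(Measure.map Y P))))
    (hH2 : ∀ φ ∈ 𝒟, ∀ χ ∈ 𝒟,
      Tendsto (fun n => α n * ∫ ω, (φ (Y ω) - φ (Yn n ω)) * χ (Yn n ω) ∂P)
        atTop (𝓝 (∫ x, Alow φ x * χ x ∂(Measure.map Y P))))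
    (p : ℝ) (hp : 1 ≤ p)
    (hmom : ∀ φ ∈ 𝒟, ∀ ψ ∈ 𝒟,
      Tendsto (fun n => α n * ∫ ω, (φ (Yn n ω) - φ (Y ω)) ^ 2 * |ψ (Yn n ω) - ψ (Y ω)| ^ p ∂P)
        atTop (𝓝 0)) :
    ∀ φ ∈ 𝒟, ∀ χ ∈ 𝒟,
      ∀ᵐ x ∂(Measure.map Y P),
        (Abar (φ * χ) x - Alow (φ * χ) x) / 2 =
          (Abar φ x - Alow φ x) / 2 * χ x + φ x * ((Abar χ x - Alow χ x) / 2) := by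
  intro φ hφ χ hχ
  haveI hPμ : IsProbabilityMeasure (Measure.map Y P) :=
    Measure.isProbabilityMeasure_map hY.aemeasurable
  -- limit of `α n * ∫ (f(Yₙ) - f(Y))²` for `f ∈ 𝒟`
  have hsq : ∀ f ∈ 𝒟, ∃ L : ℝ,
      Tendsto (fun n => α n * ∫ ω, (f (Yn n ω) - f (Y ω)) ^ 2 ∂P) atTop (𝓝 L) := by
    intro f hf
    obtain ⟨Cf, hCf⟩ := h_bdd f hf
    have hfm := h_meas f hf
    refine ⟨-(∫ x, Alow f x * f x ∂(Measure.map Y P))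
      - ∫ x, Abar f x * f x ∂(Measure.map Y P), ?_⟩
    have e1 := hH1 f hf f hf
    have e2 := hH2 f hf f hf
    have heq : (fun n => α n * ∫ ω, (f (Yn n ω) - f (Y ω)) ^ 2 ∂P)
        = fun n => -(α n * ∫ ω, (f (Y ω) - f (Yn n ω)) * f (Yn n ω) ∂P)
            - α n * ∫ ω, (f (Yn n ω) - f (Y ω)) * f (Y ω) ∂P := by
      funext n
      have hint1 : Integrable (fun ω => (f (Y ω) - f (Yn n ω)) * f (Yn n ω)) P :=
        sbofo_shape (hYn n) hY hfm hfm hCf hCf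
      have hint2 : Integrable (fun ω => (f (Yn n ω) - f (Y ω)) * f (Y ω)) P :=
        sbofo_shape hY (hYn n) hfm hfm hCf hCf
      have h3 : ∫ ω, (f (Yn n ω) - f (Y ω)) ^ 2 ∂P
          = ∫ ω, (-((f (Y ω) - f (Yn n ω)) * f (Yn n ω))
              - (f (Yn n ω) - f (Y ω)) * f (Y ω)) ∂P :=
        integral_congr_ae (ae_of_all _ fun ω => by ring)
      have hint1n : Integrable (fun ω => -((f (Y ω) - f (Yn n ω)) * f (Yn n ω))) P :=
        hint1.neg
      rw [h3, integral_sub hint1n hint2,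
        integral_neg (fun ω => (f (Y ω) - f (Yn n ω)) * f (Yn n ω))]
      ring
    rw [heq]
    exact e2.neg.sub e1
  -- key vanishing fact
  have hkey : ∀ f ∈ 𝒟, ∀ g ∈ 𝒟, Tendsto (fun n => α n * ∫ ω,
      (f (Yn n ω) - f (Y ω)) ^ 2 * |g (Yn n ω) - g (Y ω)| ∂P) atTop (𝓝 0) := by
    intro f hf g hg
    obtain ⟨Cf, hCf⟩ := h_bdd f hf
    obtain ⟨Cg, hCg⟩ := h_bdd g hg
    obtain ⟨L, hL⟩ := hsq f hf
    exact sbofo_key hY hYn hα (h_meas f hf) (h_meas g hg) hCf hCg hp hL (hmom f hf g hg)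
  -- data for φ, χ
  have hφχ : φ * χ ∈ 𝒟 := h_mul φ hφ χ hχ
  obtain ⟨Cφ, hCφ⟩ := h_bdd φ hφ
  obtain ⟨Cχ, hCχ⟩ := h_bdd χ hχ
  have hφm := h_meas φ hφ
  have hχm := h_meas χ hχ
  have hCφχ : ∀ x, |(φ * χ) x| ≤ Cφ * Cχ := fun x => sbofo_abs_mul_le (hCφ x) (hCχ x)
  -- membership in L² of the defect function G
  have hG2 : MemLp (fun x => Abar (φ * χ) x - Alow (φ * χ) x
      - ((Abar φ x - Alow φ x) * χ x + φ x * (Abar χ x - Alow χ x))) 2 (Measure.map Y P) := by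
    have m1 : MemLp (fun x => (Abar φ x - Alow φ x) * χ x) 2 (Measure.map Y P) :=
      sbofo_memL2_mul ((hAbarL2 φ hφ).sub (hAlowL2 φ hφ)) hχm hCχ
    have m2 : MemLp (fun x => φ x * (Abar χ x - Alow χ x)) 2 (Measure.map Y P) :=
      sbofo_memL2_mul' ((hAbarL2 χ hχ).sub (hAlowL2 χ hχ)) hφm hCφ
    exact ((hAbarL2 _ hφχ).sub (hAlowL2 _ hφχ)).sub (m1.add m2)
  -- the weak identity against every ψ ∈ 𝒟
  have h0 : ∀ ψ ∈ 𝒟, ∫ x, (Abar (φ * χ) x - Alow (φ * χ) x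
      - ((Abar φ x - Alow φ x) * χ x + φ x * (Abar χ x - Alow χ x))) * ψ x
        ∂(Measure.map Y P) = 0 := by
    intro ψ hψ
    obtain ⟨Cψ, hCψ⟩ := h_bdd ψ hψ
    have hψm := h_meas ψ hψ
    have hχψ : χ * ψ ∈ 𝒟 := h_mul χ hχ ψ hψ
    have hφψ : φ * ψ ∈ 𝒟 := h_mul φ hφ ψ hψ
    have hCχψ : ∀ x, |(χ * ψ) x| ≤ Cχ * Cψ := fun x => sbofo_abs_mul_le (hCχ x) (hCψ x)
    have hCφψ : ∀ x, |(φ * ψ) x| ≤ Cφ * Cψ := fun x => sbofo_abs_mul_le (hCφ x) (hCψ x)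
    have tA := hH1 (φ * χ) hφχ ψ hψ
    have tA' := hH2 (φ * χ) hφχ ψ hψ
    have tB := hH1 φ hφ (χ * ψ) hχψ
    have tB' := hH2 φ hφ (χ * ψ) hχψ
    have tC := hH1 χ hχ (φ * ψ) hφψ
    have tC' := hH2 χ hχ (φ * ψ) hφψ
    have tBig := ((tA.sub tA').sub (tB.sub tB')).sub (tC.sub tC')
    -- rewrite the sequence as a single integral of a triple product
    have hfe : (fun n =>
        ((α n * ∫ ω, ((φ * χ) (Yn n ω) - (φ * χ) (Y ω)) * ψ (Y ω) ∂P)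
          - α n * ∫ ω, ((φ * χ) (Y ω) - (φ * χ) (Yn n ω)) * ψ (Yn n ω) ∂P)
        - ((α n * ∫ ω, (φ (Yn n ω) - φ (Y ω)) * (χ * ψ) (Y ω) ∂P)
          - α n * ∫ ω, (φ (Y ω) - φ (Yn n ω)) * (χ * ψ) (Yn n ω) ∂P)
        - ((α n * ∫ ω, (χ (Yn n ω) - χ (Y ω)) * (φ * ψ) (Y ω) ∂P)
          - α n * ∫ ω, (χ (Y ω) - χ (Yn n ω)) * (φ * ψ) (Yn n ω) ∂P))
        = fun n => α n * ∫ ω, (φ (Yn n ω) - φ (Y ω)) * (χ (Yn n ω) - χ (Y ω))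
            * (ψ (Y ω) - ψ (Yn n ω)) ∂P := by
      funext n
      have i1 : Integrable (fun ω => ((φ * χ) (Yn n ω) - (φ * χ) (Y ω)) * ψ (Y ω)) P :=
        sbofo_shape hY (hYn n) (hφm.mul hχm) hψm hCφχ hCψ
      have i2 : Integrable (fun ω => ((φ * χ) (Y ω) - (φ * χ) (Yn n ω)) * ψ (Yn n ω)) P :=
        sbofo_shape (hYn n) hY (hφm.mul hχm) hψm hCφχ hCψ
      have i3 : Integrable (fun ω => (φ (Yn n ω) - φ (Y ω)) * (χ * ψ) (Y ω)) P :=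
        sbofo_shape hY (hYn n) hφm (hχm.mul hψm) hCφ hCχψ
      have i4 : Integrable (fun ω => (φ (Y ω) - φ (Yn n ω)) * (χ * ψ) (Yn n ω)) P :=
        sbofo_shape (hYn n) hY hφm (hχm.mul hψm) hCφ hCχψ
      have i5 : Integrable (fun ω => (χ (Yn n ω) - χ (Y ω)) * (φ * ψ) (Y ω)) P :=
        sbofo_shape hY (hYn n) hχm (hφm.mul hψm) hCχ hCφψ
      have i6 : Integrable (fun ω => (χ (Y ω) - χ (Yn n ω)) * (φ * ψ) (Yn n ω)) P :=
        sbofo_shape (hYn n) hY hχm (hφm.mul hψm) hCχ hCφψ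
      have hcomb : (∫ ω, ((φ * χ) (Yn n ω) - (φ * χ) (Y ω)) * ψ (Y ω) ∂P)
          - (∫ ω, ((φ * χ) (Y ω) - (φ * χ) (Yn n ω)) * ψ (Yn n ω) ∂P)
          - (∫ ω, (φ (Yn n ω) - φ (Y ω)) * (χ * ψ) (Y ω) ∂P)
          + (∫ ω, (φ (Y ω) - φ (Yn n ω)) * (χ * ψ) (Yn n ω) ∂P)
          - (∫ ω, (χ (Yn n ω) - χ (Y ω)) * (φ * ψ) (Y ω) ∂P)
          + (∫ ω, (χ (Y ω) - χ (Yn n ω)) * (φ * ψ) (Yn n ω) ∂P)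
          = ∫ ω, (φ (Yn n ω) - φ (Y ω)) * (χ (Yn n ω) - χ (Y ω))
              * (ψ (Y ω) - ψ (Yn n ω)) ∂P := by
        have c2 : Integrable (fun ω => ((φ * χ) (Yn n ω) - (φ * χ) (Y ω)) * ψ (Y ω)
            - ((φ * χ) (Y ω) - (φ * χ) (Yn n ω)) * ψ (Yn n ω)) P := i1.sub i2
        have c3 : Integrable (fun ω => ((φ * χ) (Yn n ω) - (φ * χ) (Y ω)) * ψ (Y ω)
            - ((φ * χ) (Y ω) - (φ * χ) (Yn n ω)) * ψ (Yn n ω)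
            - (φ (Yn n ω) - φ (Y ω)) * (χ * ψ) (Y ω)) P := c2.sub i3
        have c4 : Integrable (fun ω => ((φ * χ) (Yn n ω) - (φ * χ) (Y ω)) * ψ (Y ω)
            - ((φ * χ) (Y ω) - (φ * χ) (Yn n ω)) * ψ (Yn n ω)
            - (φ (Yn n ω) - φ (Y ω)) * (χ * ψ) (Y ω)
            + (φ (Y ω) - φ (Yn n ω)) * (χ * ψ) (Yn n ω)) P := c3.add i4
        have c5 : Integrable (fun ω => ((φ * χ) (Yn n ω) - (φ * χ) (Y ω)) * ψ (Y ω)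
            - ((φ * χ) (Y ω) - (φ * χ) (Yn n ω)) * ψ (Yn n ω)
            - (φ (Yn n ω) - φ (Y ω)) * (χ * ψ) (Y ω)
            + (φ (Y ω) - φ (Yn n ω)) * (χ * ψ) (Yn n ω)
            - (χ (Yn n ω) - χ (Y ω)) * (φ * ψ) (Y ω)) P := c4.sub i5
        rw [← integral_sub i1 i2, ← integral_sub c2 i3, ← integral_add c3 i4,
          ← integral_sub c4 i5, ← integral_add c5 i6]
        refine integral_congr_ae (ae_of_all _ fun ω => ?_)
        simp only [Pi.mul_apply]
        ring
      calc ((α n * ∫ ω, ((φ * χ) (Yn n ω) - (φ * χ) (Y ω)) * ψ (Y ω) ∂P)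
          - α n * ∫ ω, ((φ * χ) (Y ω) - (φ * χ) (Yn n ω)) * ψ (Yn n ω) ∂P)
        - ((α n * ∫ ω, (φ (Yn n ω) - φ (Y ω)) * (χ * ψ) (Y ω) ∂P)
          - α n * ∫ ω, (φ (Y ω) - φ (Yn n ω)) * (χ * ψ) (Yn n ω) ∂P)
        - ((α n * ∫ ω, (χ (Yn n ω) - χ (Y ω)) * (φ * ψ) (Y ω) ∂P)
          - α n * ∫ ω, (χ (Y ω) - χ (Yn n ω)) * (φ * ψ) (Yn n ω) ∂P)
          = α n * ((∫ ω, ((φ * χ) (Yn n ω) - (φ * χ) (Y ω)) * ψ (Y ω) ∂P)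
          - (∫ ω, ((φ * χ) (Y ω) - (φ * χ) (Yn n ω)) * ψ (Yn n ω) ∂P)
          - (∫ ω, (φ (Yn n ω) - φ (Y ω)) * (χ * ψ) (Y ω) ∂P)
          + (∫ ω, (φ (Y ω) - φ (Yn n ω)) * (χ * ψ) (Yn n ω) ∂P)
          - (∫ ω, (χ (Yn n ω) - χ (Y ω)) * (φ * ψ) (Y ω) ∂P)
          + (∫ ω, (χ (Y ω) - χ (Yn n ω)) * (φ * ψ) (Yn n ω) ∂P)) := by ring
        _ = _ := by rw [hcomb]
    -- the rewritten sequence tends to 0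
    have tsimple : Tendsto (fun n => α n * ∫ ω, (φ (Yn n ω) - φ (Y ω))
        * (χ (Yn n ω) - χ (Y ω)) * (ψ (Y ω) - ψ (Yn n ω)) ∂P) atTop (𝓝 0) := by
      have hlim : Tendsto (fun n => (1/2 : ℝ) *
          ((α n * ∫ ω, (φ (Yn n ω) - φ (Y ω)) ^ 2 * |ψ (Yn n ω) - ψ (Y ω)| ∂P)
            + α n * ∫ ω, (χ (Yn n ω) - χ (Y ω)) ^ 2 * |ψ (Yn n ω) - ψ (Y ω)| ∂P))
          atTop (𝓝 0) := by
        have := ((hkey φ hφ ψ hψ).add (hkey χ hχ ψ hψ)).const_mul (1/2 : ℝ)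
        simpa using this
      refine squeeze_zero_norm (fun n => ?_) hlim
      have hαn := (hα n).le
      have iφψ := sbofo_int_sqabs (P := P) hY (hYn n) hφm hψm hCφ hCψ
      have iχψ := sbofo_int_sqabs (P := P) hY (hYn n) hχm hψm hCχ hCψ
      have iX : Integrable (fun ω => (φ (Yn n ω) - φ (Y ω)) * (χ (Yn n ω) - χ (Y ω))
          * (ψ (Y ω) - ψ (Yn n ω))) P := by
        refine sbofo_integrable
          (((((hφm.comp (hYn n)).sub (hφm.comp hY)).mul
            ((hχm.comp (hYn n)).sub (hχm.comp hY))).mul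
            ((hψm.comp hY).sub (hψm.comp (hYn n)))))
          (C := (2 * Cφ) * (2 * Cχ) * (2 * Cψ)) fun ω => ?_
        exact sbofo_abs_mul_le (sbofo_abs_mul_le
          (sbofo_abs_sub_le (hCφ _) (hCφ _)) (sbofo_abs_sub_le (hCχ _) (hCχ _)))
          (sbofo_abs_sub_le (hCψ _) (hCψ _))
      have hptX : ∀ ω, |(φ (Yn n ω) - φ (Y ω)) * (χ (Yn n ω) - χ (Y ω))
          * (ψ (Y ω) - ψ (Yn n ω))|
          ≤ (1/2 : ℝ) * ((φ (Yn n ω) - φ (Y ω)) ^ 2 * |ψ (Yn n ω) - ψ (Y ω)|)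
            + (1/2 : ℝ) * ((χ (Yn n ω) - χ (Y ω)) ^ 2 * |ψ (Yn n ω) - ψ (Y ω)|) := by
        intro ω
        have hamgm : |φ (Yn n ω) - φ (Y ω)| * |χ (Yn n ω) - χ (Y ω)|
            ≤ ((φ (Yn n ω) - φ (Y ω)) ^ 2 + (χ (Yn n ω) - χ (Y ω)) ^ 2) / 2 := by
          nlinarith [sq_nonneg (|φ (Yn n ω) - φ (Y ω)| - |χ (Yn n ω) - χ (Y ω)|),
            sq_abs (φ (Yn n ω) - φ (Y ω)), sq_abs (χ (Yn n ω) - χ (Y ω))]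
        have habs : |ψ (Y ω) - ψ (Yn n ω)| = |ψ (Yn n ω) - ψ (Y ω)| := abs_sub_comm _ _
        calc |(φ (Yn n ω) - φ (Y ω)) * (χ (Yn n ω) - χ (Y ω)) * (ψ (Y ω) - ψ (Yn n ω))|
            = |φ (Yn n ω) - φ (Y ω)| * |χ (Yn n ω) - χ (Y ω)| * |ψ (Y ω) - ψ (Yn n ω)| := by
              rw [abs_mul, abs_mul]
          _ ≤ (((φ (Yn n ω) - φ (Y ω)) ^ 2 + (χ (Yn n ω) - χ (Y ω)) ^ 2) / 2)
              * |ψ (Y ω) - ψ (Yn n ω)| :=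
              mul_le_mul_of_nonneg_right hamgm (abs_nonneg _)
          _ = (1/2 : ℝ) * ((φ (Yn n ω) - φ (Y ω)) ^ 2 * |ψ (Yn n ω) - ψ (Y ω)|)
              + (1/2 : ℝ) * ((χ (Yn n ω) - χ (Y ω)) ^ 2 * |ψ (Yn n ω) - ψ (Y ω)|) := by
              rw [habs]; ring
      calc ‖α n * ∫ ω, (φ (Yn n ω) - φ (Y ω)) * (χ (Yn n ω) - χ (Y ω))
          * (ψ (Y ω) - ψ (Yn n ω)) ∂P‖
          = α n * ‖∫ ω, (φ (Yn n ω) - φ (Y ω)) * (χ (Yn n ω) - χ (Y ω))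
            * (ψ (Y ω) - ψ (Yn n ω)) ∂P‖ := by
            rw [norm_mul, Real.norm_eq_abs (α n), abs_of_nonneg hαn]
        _ ≤ α n * ∫ ω, |(φ (Yn n ω) - φ (Y ω)) * (χ (Yn n ω) - χ (Y ω))
            * (ψ (Y ω) - ψ (Yn n ω))| ∂P := by
            refine mul_le_mul_of_nonneg_left ?_ hαn
            have h := norm_integral_le_integral_norm (μ := P)
              (fun ω => (φ (Yn n ω) - φ (Y ω)) * (χ (Yn n ω) - χ (Y ω))
                * (ψ (Y ω) - ψ (Yn n ω)))
            simp only [Real.norm_eq_abs] at h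
            exact h
        _ ≤ α n * ((1/2 : ℝ) * (∫ ω, (φ (Yn n ω) - φ (Y ω)) ^ 2
              * |ψ (Yn n ω) - ψ (Y ω)| ∂P)
            + (1/2 : ℝ) * ∫ ω, (χ (Yn n ω) - χ (Y ω)) ^ 2
              * |ψ (Yn n ω) - ψ (Y ω)| ∂P) := by
            refine mul_le_mul_of_nonneg_left ?_ hαn
            calc ∫ ω, |(φ (Yn n ω) - φ (Y ω)) * (χ (Yn n ω) - χ (Y ω))
                * (ψ (Y ω) - ψ (Yn n ω))| ∂P
                ≤ ∫ ω, ((1/2 : ℝ) * ((φ (Yn n ω) - φ (Y ω)) ^ 2 * |ψ (Yn n ω) - ψ (Y ω)|)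
                  + (1/2 : ℝ) * ((χ (Yn n ω) - χ (Y ω)) ^ 2 * |ψ (Yn n ω) - ψ (Y ω)|)) ∂P :=
                  integral_mono iX.abs ((iφψ.const_mul _).add (iχψ.const_mul _)) hptX
              _ = _ := by
                  rw [integral_add (iφψ.const_mul _) (iχψ.const_mul _),
                    integral_const_mul, integral_const_mul]
        _ = (1/2 : ℝ) * ((α n * ∫ ω, (φ (Yn n ω) - φ (Y ω)) ^ 2
              * |ψ (Yn n ω) - ψ (Y ω)| ∂P)
            + α n * ∫ ω, (χ (Yn n ω) - χ (Y ω)) ^ 2 * |ψ (Yn n ω) - ψ (Y ω)| ∂P) := by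
            ring
    have tZero : Tendsto (fun n =>
        ((α n * ∫ ω, ((φ * χ) (Yn n ω) - (φ * χ) (Y ω)) * ψ (Y ω) ∂P)
          - α n * ∫ ω, ((φ * χ) (Y ω) - (φ * χ) (Yn n ω)) * ψ (Yn n ω) ∂P)
        - ((α n * ∫ ω, (φ (Yn n ω) - φ (Y ω)) * (χ * ψ) (Y ω) ∂P)
          - α n * ∫ ω, (φ (Y ω) - φ (Yn n ω)) * (χ * ψ) (Yn n ω) ∂P)
        - ((α n * ∫ ω, (χ (Yn n ω) - χ (Y ω)) * (φ * ψ) (Y ω) ∂P)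
          - α n * ∫ ω, (χ (Y ω) - χ (Yn n ω)) * (φ * ψ) (Yn n ω) ∂P))
        atTop (𝓝 0) := by
      rw [hfe]; exact tsimple
    have huniq := tendsto_nhds_unique tBig tZero
    -- now assemble the μ-integral identity
    have j1 : Integrable (fun x => Abar (φ * χ) x * ψ x) (Measure.map Y P) := by
      have h := ((hAbarL2 _ hφχ).integrable one_le_two).bdd_mul
        (c := Cψ) hψm.aestronglyMeasurable (ae_of_all _ fun x => by simpa [Real.norm_eq_abs] using hCψ x)
      exact h.congr (ae_of_all _ fun x => by simp only [Pi.mul_apply]; ring)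
    have j2 : Integrable (fun x => Alow (φ * χ) x * ψ x) (Measure.map Y P) := by
      have h := ((hAlowL2 _ hφχ).integrable one_le_two).bdd_mul
        (c := Cψ) hψm.aestronglyMeasurable (ae_of_all _ fun x => by simpa [Real.norm_eq_abs] using hCψ x)
      exact h.congr (ae_of_all _ fun x => by simp only [Pi.mul_apply]; ring)
    have j3 : Integrable (fun x => Abar φ x * (χ * ψ) x) (Measure.map Y P) := by
      have h := ((hAbarL2 φ hφ).integrable one_le_two).bdd_mul
        (hχm.mul hψm).aestronglyMeasurable
        (ae_of_all _ fun x => by simp only [Pi.mul_apply, Real.norm_eq_abs]; exact hCχψ x)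
      exact h.congr (ae_of_all _ fun x => by simp only [Pi.mul_apply]; ring)
    have j4 : Integrable (fun x => Alow φ x * (χ * ψ) x) (Measure.map Y P) := by
      have h := ((hAlowL2 φ hφ).integrable one_le_two).bdd_mul
        (hχm.mul hψm).aestronglyMeasurable
        (ae_of_all _ fun x => by simp only [Pi.mul_apply, Real.norm_eq_abs]; exact hCχψ x)
      exact h.congr (ae_of_all _ fun x => by simp only [Pi.mul_apply]; ring)
    have j5 : Integrable (fun x => Abar χ x * (φ * ψ) x) (Measure.map Y P) := by
      have h := ((hAbarL2 χ hχ).integrable one_le_two).bdd_mul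
        (hφm.mul hψm).aestronglyMeasurable
        (ae_of_all _ fun x => by simp only [Pi.mul_apply, Real.norm_eq_abs]; exact hCφψ x)
      exact h.congr (ae_of_all _ fun x => by simp only [Pi.mul_apply]; ring)
    have j6 : Integrable (fun x => Alow χ x * (φ * ψ) x) (Measure.map Y P) := by
      have h := ((hAlowL2 χ hχ).integrable one_le_two).bdd_mul
        (hφm.mul hψm).aestronglyMeasurable
        (ae_of_all _ fun x => by simp only [Pi.mul_apply, Real.norm_eq_abs]; exact hCφψ x)
      exact h.congr (ae_of_all _ fun x => by simp only [Pi.mul_apply]; ring)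
    have hGint : ∫ x, (Abar (φ * χ) x - Alow (φ * χ) x
        - ((Abar φ x - Alow φ x) * χ x + φ x * (Abar χ x - Alow χ x))) * ψ x
          ∂(Measure.map Y P)
        = ((∫ x, Abar (φ * χ) x * ψ x ∂(Measure.map Y P))
            - ∫ x, Alow (φ * χ) x * ψ x ∂(Measure.map Y P))
          - ((∫ x, Abar φ x * (χ * ψ) x ∂(Measure.map Y P))
            - ∫ x, Alow φ x * (χ * ψ) x ∂(Measure.map Y P))
          - ((∫ x, Abar χ x * (φ * ψ) x ∂(Measure.map Y P))
            - ∫ x, Alow χ x * (φ * ψ) x ∂(Measure.map Y P)) := by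
      have k12 : Integrable (fun x => Abar (φ * χ) x * ψ x - Alow (φ * χ) x * ψ x)
        (Measure.map Y P) := j1.sub j2
      have k34 : Integrable (fun x => Abar φ x * (χ * ψ) x - Alow φ x * (χ * ψ) x)
        (Measure.map Y P) := j3.sub j4
      have k56 : Integrable (fun x => Abar χ x * (φ * ψ) x - Alow χ x * (φ * ψ) x)
        (Measure.map Y P) := j5.sub j6
      have k1234 : Integrable (fun x => Abar (φ * χ) x * ψ x - Alow (φ * χ) x * ψ x
        - (Abar φ x * (χ * ψ) x - Alow φ x * (χ * ψ) x)) (Measure.map Y P) := k12.sub k34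
      rw [← integral_sub j1 j2, ← integral_sub j3 j4, ← integral_sub j5 j6,
        ← integral_sub k12 k34, ← integral_sub k1234 k56]
      refine integral_congr_ae (ae_of_all _ fun x => ?_)
      simp only [Pi.mul_apply]
      ring
    exact hGint.trans huniq
  -- conclude by density
  have hzero := sbofo_ae_zero (Measure.map Y P) 𝒟 h_meas h_bdd h_dense hG2 h0
  filter_upwards [hzero] with x hx
  have hx0 : Abar (φ * χ) x - Alow (φ * χ) x
      - ((Abar φ x - Alow φ x) * χ x + φ x * (Abar χ x - Alow χ x)) = 0 := by
    simpa using hx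
  linear_combination hx0 / 2
end

section
/- Let Y be uniformly distributed on [0,1] and set Y_n := Y − {2ⁿY}/2^{n+1}, the approximation of Y obtained by halving all dyadic digits of Y beyond the n-th. Then for all integers k, l, lim_{n→∞} 3·4ⁿ 𝔼[ (e^{2πik Y_n} − e^{2πik Y}) ( e^{−2πil Y_n} − e^{−2πil Y} ) ] = π² k l · 1_{{k = l}}; in particular the deterministic approximation Y_n of Y generates a non-zero limit quadratic form on trigonometric polynomials although Y_n is a function of Y and Y is a function of Y_n. -/
open MeasureTheory Filter Set
open scoped Topology

lemma exp_slope : Tendsto (fun z : ℂ => (Complex.exp z - 1) / z) (𝓝[≠] 0) (𝓝 1) := by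
  have h : HasDerivAt Complex.exp 1 0 := by simpa using Complex.hasDerivAt_exp 0
  have h2 := hasDerivAt_iff_tendsto_slope.mp h
  simpa [slope_fun_def, Function.comp, slope_def_field, div_eq_mul_inv, mul_comm] using h2

lemma tendsto_pow_exp (w : ℂ) :
    Tendsto (fun n : ℕ => (2:ℂ)^n * (Complex.exp (w / 2^n) - 1)) atTop (𝓝 w) := by
  rcases eq_or_ne w 0 with rfl | hw
  · simpa using tendsto_const_nhds (α := ℂ) (x := 0) (f := atTop (α := ℕ))
  · have h0 : Tendsto (fun n : ℕ => w / 2^n) atTop (𝓝 0) := by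
      have : Tendsto (fun n : ℕ => ((1:ℂ)/2)^n) atTop (𝓝 0) := by
        apply tendsto_pow_atTop_nhds_zero_of_norm_lt_one
        norm_num
      have := this.const_mul w
      simpa [div_pow, mul_div_assoc, div_eq_mul_inv, inv_pow] using this
    have h1 : Tendsto (fun n : ℕ => w / 2^n) atTop (𝓝[≠] 0) := by
      apply tendsto_nhdsWithin_of_tendsto_nhds_of_eventually_within _ h0
      filter_upwards with n
      simp [hw, pow_ne_zero]
    have h2 := (exp_slope.comp h1).const_mul w
    simp only [mul_one] at h2
    apply h2.congr
    intro n
    have h2n : (2:ℂ)^n ≠ 0 := pow_ne_zero _ two_ne_zero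
    simp only [Function.comp]
    field_simp

lemma tendsto_main (a b : ℂ) :
    Tendsto (fun n : ℕ => ((3:ℂ) * 4^n) *
      ((Complex.exp (a / 2^(n+1)) - 1) * (Complex.exp (b / 2^(n+1)) - 1))) atTop
      (𝓝 (3/4 * (a * b))) := by
  have ha : Tendsto (fun n : ℕ => (2:ℂ)^(n+1) * (Complex.exp (a / 2^(n+1)) - 1)) atTop (𝓝 a) :=
    (tendsto_pow_exp a).comp (tendsto_add_atTop_nat 1)
  have hb : Tendsto (fun n : ℕ => (2:ℂ)^(n+1) * (Complex.exp (b / 2^(n+1)) - 1)) atTop (𝓝 b) :=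
    (tendsto_pow_exp b).comp (tendsto_add_atTop_nat 1)
  have := ((ha.mul hb).const_mul ((3:ℂ)/4))
  apply this.congr
  intro n
  have h4 : ((2:ℂ)^(n+1)) * ((2:ℂ)^(n+1)) = 4 * 4^n := by
    rw [← mul_pow]
    norm_num [pow_succ]; ring
  calc (3:ℂ)/4 * ((2^(n+1) * (Complex.exp (a / 2^(n+1)) - 1)) *
        (2^(n+1) * (Complex.exp (b / 2^(n+1)) - 1)))
      = (3:ℂ)/4 * (((2:ℂ)^(n+1)) * ((2:ℂ)^(n+1))) *
        ((Complex.exp (a / 2^(n+1)) - 1) * (Complex.exp (b / 2^(n+1)) - 1)) := by ring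
    _ = ((3:ℂ) * 4^n) * ((Complex.exp (a / 2^(n+1)) - 1) * (Complex.exp (b / 2^(n+1)) - 1)) := by
        rw [h4]; ring

lemma tendsto_G (k : ℤ) :
    Tendsto (fun n : ℕ => ((3 * 4 ^ n : ℝ) : ℂ) *
      ∫ x in Ioc (0:ℝ) 1,
        ((Complex.exp (-(2 * Real.pi * Complex.I * k * x / 2^(n+1))) - 1) *
         (Complex.exp (2 * Real.pi * Complex.I * k * x / 2^(n+1)) - 1)))
      atTop (𝓝 ((Real.pi:ℂ)^2 * k * k)) := by
  set F : ℕ → ℝ → ℂ := fun n x => ((3 * 4 ^ n : ℝ) : ℂ) *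
      ((Complex.exp (-(2 * Real.pi * Complex.I * k * x / 2^(n+1))) - 1) *
       (Complex.exp (2 * Real.pi * Complex.I * k * x / 2^(n+1)) - 1)) with hF
  have hpull : ∀ n : ℕ, ((3 * 4 ^ n : ℝ) : ℂ) *
      (∫ x in Ioc (0:ℝ) 1,
        ((Complex.exp (-(2 * Real.pi * Complex.I * k * x / 2^(n+1))) - 1) *
         (Complex.exp (2 * Real.pi * Complex.I * k * x / 2^(n+1)) - 1)))
      = ∫ x in Ioc (0:ℝ) 1, F n x := fun n => (integral_const_mul _ _).symm
  have hval : (∫ x in Ioc (0:ℝ) 1, ((3:ℂ) * (Real.pi:ℂ)^2 * (k:ℂ)^2 * (x:ℂ)^2))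
      = (Real.pi:ℂ)^2 * k * k := by
    rw [← intervalIntegral.integral_of_le zero_le_one]
    rw [intervalIntegral.integral_const_mul]
    have : (∫ x in (0:ℝ)..1, ((x:ℂ))^2) = 1/3 := by
      simp only [← Complex.ofReal_pow]
      rw [intervalIntegral.integral_ofReal, integral_pow]
      norm_num
    rw [this]; ring
  -- choose N with 2π(|k|+1) ≤ 2^N
  obtain ⟨N, hN⟩ : ∃ N : ℕ, 2 * Real.pi * (|(k:ℝ)| + 1) < 2 ^ N :=
    pow_unbounded_of_one_lt _ one_lt_two
  have key : Tendsto (fun n : ℕ => ∫ x in Ioc (0:ℝ) 1, F n x) atTop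
      (𝓝 (∫ x in Ioc (0:ℝ) 1, ((3:ℂ) * (Real.pi:ℂ)^2 * (k:ℂ)^2 * (x:ℂ)^2))) := by
    apply tendsto_integral_filter_of_dominated_convergence
      (bound := fun _ => (12:ℝ) * Real.pi^2 * (k:ℝ)^2)
    · filter_upwards with n
      apply Continuous.aestronglyMeasurable
      fun_prop
    · filter_upwards [eventually_ge_atTop N] with n hn
      filter_upwards [ae_restrict_mem measurableSet_Ioc] with x hx
      have hx0 : 0 < x := hx.1
      have hx1 : x ≤ 1 := hx.2
      set z : ℂ := 2 * Real.pi * Complex.I * k * x / 2^(n+1) with hzdef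
      have hzabs : ‖z‖ = 2 * Real.pi * |(k:ℝ)| * |x| / 2^(n+1) := by
        simp only [hzdef, norm_div, norm_mul, norm_pow, Complex.norm_two, Complex.norm_I,
          Complex.norm_real, Real.norm_eq_abs, Complex.norm_intCast, abs_of_pos Real.pi_pos]
        ring
      have hxabs : |x| ≤ 1 := by rw [abs_of_pos hx0]; exact hx1
      have hkpos : (0:ℝ) ≤ |(k:ℝ)| := abs_nonneg _
      have hppos : (0:ℝ) < Real.pi := Real.pi_pos
      have ht0 : (0:ℝ) ≤ 2 * Real.pi * |(k:ℝ)| * |x| := by positivity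
      have hle1 : ‖z‖ ≤ 1 := by
        rw [hzabs]
        rw [div_le_one (by positivity)]
        calc 2 * Real.pi * |(k:ℝ)| * |x| ≤ 2 * Real.pi * (|(k:ℝ)| + 1) * 1 := by
              have h1 : 2 * Real.pi * |(k:ℝ)| * |x| ≤ 2 * Real.pi * |(k:ℝ)| * 1 :=
                mul_le_mul_of_nonneg_left hxabs (by positivity)
              nlinarith
          _ ≤ 2 ^ N := by nlinarith
          _ ≤ 2 ^ (n+1) := by
              apply pow_le_pow_right₀ one_le_two
              omega
      have hb1 : ‖Complex.exp (-z) - 1‖ ≤ 2 * ‖z‖ := by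
        have := Complex.norm_exp_sub_one_le (x := -z) (by simpa using hle1)
        simpa using this
      have hb2 : ‖Complex.exp z - 1‖ ≤ 2 * ‖z‖ :=
        Complex.norm_exp_sub_one_le hle1
      have habsz0 : (0:ℝ) ≤ ‖z‖ := norm_nonneg _
      have h2n : ((2:ℝ)^(n+1))^2 = 4 * 4^n := by
        rw [← pow_mul]
        rw [show (4:ℝ) * 4^n = 4^(n+1) by rw [pow_succ]; ring]
        rw [show (4:ℝ) = 2^2 by norm_num, ← pow_mul]
        ring_nf
      calc ‖F n x‖ = (3 * 4^n) * (‖Complex.exp (-z) - 1‖ *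
              ‖Complex.exp z - 1‖) := by
            simp [hF, hzdef, Complex.norm_real, Real.norm_eq_abs, norm_mul, abs_of_nonneg (by positivity : (0:ℝ) ≤ 3 * 4^n)]
        _ ≤ (3 * 4^n) * ((2 * ‖z‖) * (2 * ‖z‖)) := by
            apply mul_le_mul_of_nonneg_left _ (by positivity)
            exact mul_le_mul hb1 hb2 (norm_nonneg _) (by positivity)
        _ = 3 * (2 * Real.pi * |(k:ℝ)| * |x|)^2 * (4 * 4^n / ((2:ℝ)^(n+1))^2) := by
            rw [hzabs]; field_simp; ring
        _ = 3 * (2 * Real.pi * |(k:ℝ)| * |x|)^2 := by rw [h2n]; field_simp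
        _ ≤ 3 * (2 * Real.pi * |(k:ℝ)| * 1)^2 := by
            apply mul_le_mul_of_nonneg_left _ (by norm_num)
            apply pow_le_pow_left₀ ht0
            have h1 : 2 * Real.pi * |(k:ℝ)| * |x| ≤ 2 * Real.pi * |(k:ℝ)| * 1 :=
              mul_le_mul_of_nonneg_left hxabs (by positivity)
            linarith
        _ = 12 * Real.pi^2 * |(k:ℝ)|^2 := by ring
        _ = 12 * Real.pi^2 * (k:ℝ)^2 := by rw [sq_abs]
    · exact integrableOn_const measure_Ioc_lt_top.ne
    · filter_upwards with x
      have h := tendsto_main (-(2 * Real.pi * Complex.I * k * x)) (2 * Real.pi * Complex.I * k * x)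
      have heq : (3:ℂ)/4 * (-(2 * Real.pi * Complex.I * (k:ℂ) * (x:ℂ)) *
          (2 * Real.pi * Complex.I * (k:ℂ) * (x:ℂ)))
          = (3:ℂ) * (Real.pi:ℂ)^2 * (k:ℂ)^2 * (x:ℂ)^2 := by
        have : (Complex.I)^2 = -1 := Complex.I_sq
        ring_nf
        rw [this]  -- may need adjusting
        ring
      rw [heq] at h
      apply h.congr
      intro n
      simp only [hF, neg_div]
      push_cast
      ring_nf
  rw [← hval]
  exact key.congr fun n => (hpull n).symm

noncomputable def fInt (k l : ℤ) (n : ℕ) (y : ℝ) : ℂ :=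
  (Complex.exp (2 * Real.pi * Complex.I * k *
      (y - Int.fract (2 ^ n * y) / 2 ^ (n + 1))) -
    Complex.exp (2 * Real.pi * Complex.I * k * y)) *
  (Complex.exp (-(2 * Real.pi * Complex.I * l *
      (y - Int.fract (2 ^ n * y) / 2 ^ (n + 1)))) -
    Complex.exp (-(2 * Real.pi * Complex.I * l * y)))

lemma key_algebra (A B y u : ℂ) :
    (Complex.exp (A * (y - u)) - Complex.exp (A * y)) *
      (Complex.exp (-(B * (y - u))) - Complex.exp (-(B * y)))
    = Complex.exp ((A - B) * y) *
        ((Complex.exp (-(A * u)) - 1) * (Complex.exp (B * u) - 1)) := by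
  rw [show A * (y - u) = A * y + -(A * u) by ring,
    show -(B * (y - u)) = -(B * y) + B * u by ring,
    show (A - B) * y = A * y + -(B * y) by ring,
    Complex.exp_add, Complex.exp_add, Complex.exp_add]
  ring

lemma norm_exp_im (z : ℂ) (h : z.re = 0) : ‖Complex.exp z‖ = 1 := by
  simp [Complex.norm_exp, h]

lemma norm_exp_aux (m : ℤ) (t : ℝ) :
    ‖Complex.exp (2 * Real.pi * Complex.I * (m:ℂ) * (t:ℂ))‖ = 1 := by
  apply norm_exp_im
  have : (2 * Real.pi * Complex.I * (m:ℂ) * (t:ℂ))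
      = ((2 * Real.pi * m * t : ℝ) : ℂ) * Complex.I := by push_cast; ring
  rw [this]
  simp

lemma fInt_measurable (k l : ℤ) (n : ℕ) : Measurable (fInt k l n) := by
  unfold fInt
  have hfr : Measurable fun y : ℝ => Int.fract ((2:ℝ) ^ n * y) :=
    measurable_fract.comp (measurable_const_mul _)
  fun_prop

lemma fInt_norm_le (k l : ℤ) (n : ℕ) (y : ℝ) : ‖fInt k l n y‖ ≤ 4 := by
  unfold fInt
  set u : ℝ := Int.fract ((2:ℝ) ^ n * y) with hu
  have h1 : ((y:ℂ) - (u:ℂ) / 2 ^ (n + 1)) = ((y - u / 2 ^ (n + 1) : ℝ) : ℂ) := by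
    push_cast; ring
  rw [norm_mul]
  have e1 : ∀ m : ℤ, ‖Complex.exp (2 * Real.pi * Complex.I * (m:ℂ) *
      ((y:ℂ) - (u:ℂ) / 2 ^ (n + 1)))‖ = 1 := fun m => by rw [h1]; exact norm_exp_aux m _
  have e2 : ∀ m : ℤ, ‖Complex.exp (2 * Real.pi * Complex.I * (m:ℂ) * (y:ℂ))‖ = 1 :=
    fun m => norm_exp_aux m y
  have e3 : ∀ m : ℤ, ‖Complex.exp (-(2 * Real.pi * Complex.I * (m:ℂ) *
      ((y:ℂ) - (u:ℂ) / 2 ^ (n + 1))))‖ = 1 := fun m => by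
    rw [h1, show -(2 * Real.pi * Complex.I * (m:ℂ) * ((y - u / 2 ^ (n + 1) : ℝ) : ℂ))
        = 2 * Real.pi * Complex.I * ((-m : ℤ):ℂ) * ((y - u / 2 ^ (n + 1) : ℝ) : ℂ) by
      push_cast; ring]
    exact norm_exp_aux _ _
  have e4 : ∀ m : ℤ, ‖Complex.exp (-(2 * Real.pi * Complex.I * (m:ℂ) * (y:ℂ)))‖ = 1 :=
    fun m => by
      rw [show -(2 * Real.pi * Complex.I * (m:ℂ) * (y:ℂ))
          = 2 * Real.pi * Complex.I * ((-m : ℤ):ℂ) * (y:ℂ) by push_cast; ring]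
      exact norm_exp_aux _ _
  have b1 : ‖Complex.exp (2 * Real.pi * Complex.I * (k:ℂ) *
      ((y:ℂ) - (u:ℂ) / 2 ^ (n + 1))) - Complex.exp (2 * Real.pi * Complex.I * (k:ℂ) * (y:ℂ))‖
      ≤ 2 := by
    calc _ ≤ ‖Complex.exp (2 * Real.pi * Complex.I * (k:ℂ) * ((y:ℂ) - (u:ℂ) / 2 ^ (n + 1)))‖
          + ‖Complex.exp (2 * Real.pi * Complex.I * (k:ℂ) * (y:ℂ))‖ := norm_sub_le _ _
      _ ≤ 2 := by rw [e1 k, e2 k]; norm_num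
  have b2 : ‖Complex.exp (-(2 * Real.pi * Complex.I * (l:ℂ) *
      ((y:ℂ) - (u:ℂ) / 2 ^ (n + 1)))) - Complex.exp (-(2 * Real.pi * Complex.I * (l:ℂ) * (y:ℂ)))‖
      ≤ 2 := by
    calc _ ≤ ‖Complex.exp (-(2 * Real.pi * Complex.I * (l:ℂ) * ((y:ℂ) - (u:ℂ) / 2 ^ (n + 1))))‖
          + ‖Complex.exp (-(2 * Real.pi * Complex.I * (l:ℂ) * (y:ℂ)))‖ := norm_sub_le _ _
      _ ≤ 2 := by rw [e3 l, e4 l]; norm_num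
  calc _ ≤ 2 * 2 := mul_le_mul b1 b2 (norm_nonneg _) (by norm_num)
    _ = 4 := by norm_num

noncomputable def gI (k l : ℤ) (n : ℕ) : ℂ :=
  ∫ x in (0:ℝ)..1, Complex.exp (2 * Real.pi * Complex.I * ((k:ℂ) - l) * x / 2 ^ n) *
    ((Complex.exp (-(2 * Real.pi * Complex.I * k * x / 2 ^ (n + 1))) - 1) *
     (Complex.exp (2 * Real.pi * Complex.I * l * x / 2 ^ (n + 1)) - 1))

lemma interval_step (k l : ℤ) (n : ℕ) (j : ℕ) :
    (∫ y in ((j:ℝ)/2^n)..(((j:ℝ)+1)/2^n), fInt k l n y)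
    = ((2:ℝ)^n)⁻¹ • ((Complex.exp (2 * Real.pi * Complex.I * ((k:ℂ) - l) / 2 ^ n))^j *
        gI k l n) := by
  have h2npos : (0:ℝ) < 2^n := by positivity
  have h2n : (2:ℝ)^n ≠ 0 := ne_of_gt h2npos
  have h2nC : (2:ℂ)^n ≠ 0 := pow_ne_zero _ two_ne_zero
  set φ : ℝ → ℂ := fun x =>
    Complex.exp (2 * Real.pi * Complex.I * ((k:ℂ) - l) * (((x + j)/2^n : ℝ) : ℂ)) *
      ((Complex.exp (-(2 * Real.pi * Complex.I * (k:ℂ) * ((x:ℝ) : ℂ) / 2 ^ (n + 1))) - 1) *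
       (Complex.exp (2 * Real.pi * Complex.I * (l:ℂ) * ((x:ℝ) : ℂ) / 2 ^ (n + 1)) - 1)) with hφ
  have step1 : (∫ y in ((j:ℝ)/2^n)..(((j:ℝ)+1)/2^n), fInt k l n y)
      = ∫ y in ((j:ℝ)/2^n)..(((j:ℝ)+1)/2^n), φ (2^n * y + -(j:ℝ)) := by
    apply intervalIntegral.integral_congr_ae
    have hsing : ∀ᵐ y : ℝ, y ≠ ((j:ℝ)+1)/2^n := by
      have h0 : (volume : Measure ℝ) {(((j:ℝ)+1)/2^n)} = 0 := measure_singleton _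
      filter_upwards [measure_eq_zero_iff_ae_notMem.mp h0] with y hy
      simpa using hy
    filter_upwards [hsing] with y hy hyI
    have hle : (j:ℝ)/2^n ≤ ((j:ℝ)+1)/2^n := by
      gcongr
      linarith
    rw [Set.uIoc_of_le hle] at hyI
    obtain ⟨hy1, hy2⟩ := hyI
    have hy2' : y < ((j:ℝ)+1)/2^n := lt_of_le_of_ne hy2 hy
    have hfl : Int.fract ((2:ℝ)^n * y) = 2^n * y - (j:ℝ) := by
      have hflo : ⌊(2:ℝ)^n * y⌋ = (j:ℤ) := by
        rw [Int.floor_eq_iff]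
        constructor
        · push_cast
          rw [div_lt_iff₀ h2npos] at hy1
          linarith
        · push_cast
          rw [lt_div_iff₀ h2npos] at hy2'
          linarith
      rw [← Int.self_sub_floor, hflo]
      push_cast
      ring
    show fInt k l n y = φ (2^n * y + -(j:ℝ))
    unfold fInt
    rw [hfl]
    simp only [hφ]
    rw [key_algebra]
    have hc : 2 * (Real.pi:ℂ) * Complex.I * (k:ℂ) - 2 * (Real.pi:ℂ) * Complex.I * (l:ℂ)
        = 2 * (Real.pi:ℂ) * Complex.I * ((k:ℂ) - l) := by ring
    rw [hc]
    have hr : ((2:ℝ)^n * y + -(j:ℝ) + j)/2^n = y := by field_simp; ring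
    rw [hr]
    have hr2 : (2:ℝ)^n * y - (j:ℝ) = 2^n * y + -(j:ℝ) := by ring
    rw [hr2]
    simp only [mul_div_assoc]
  rw [step1]
  rw [intervalIntegral.integral_comp_mul_add φ h2n (-(j:ℝ))]
  have ea : (2:ℝ)^n * ((j:ℝ)/2^n) + -(j:ℝ) = 0 := by field_simp; ring
  have eb : (2:ℝ)^n * (((j:ℝ)+1)/2^n) + -(j:ℝ) = 1 := by field_simp; ring
  rw [ea, eb]
  congr 1
  unfold gI
  rw [← intervalIntegral.integral_const_mul]
  apply intervalIntegral.integral_congr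
  intro x _
  simp only [hφ]
  have hsplit : Complex.exp (2 * Real.pi * Complex.I * ((k:ℂ) - l) * (((x + j)/2^n : ℝ) : ℂ))
      = Complex.exp ((j:ℕ) * (2 * Real.pi * Complex.I * ((k:ℂ) - l) / 2^n)) *
        Complex.exp (2 * Real.pi * Complex.I * ((k:ℂ) - l) * (x:ℂ) / 2^n) := by
    rw [← Complex.exp_add]
    congr 1
    push_cast
    field_simp
    ring
  rw [hsplit, Complex.exp_nat_mul]
  ring

lemma fInt_intervalIntegrable (k l : ℤ) (n : ℕ) (a b : ℝ) :
    IntervalIntegrable (fInt k l n) volume a b := by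
  rw [intervalIntegrable_iff]
  apply Integrable.mono' (g := fun _ => (4:ℝ))
  · exact integrableOn_const measure_Ioc_lt_top.ne
  · exact ((fInt_measurable k l n).aestronglyMeasurable).restrict
  · filter_upwards with y using fInt_norm_le k l n y

lemma integral_eq (k l : ℤ) (n : ℕ) :
    (∫ y in Icc (0:ℝ) 1, fInt k l n y)
    = ((2:ℝ)^n)⁻¹ • ((∑ j ∈ Finset.range (2^n),
        (Complex.exp (2 * Real.pi * Complex.I * ((k:ℂ) - l) / 2 ^ n))^j) * gI k l n) := by
  have h2n : (2:ℝ)^n ≠ 0 := by positivity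
  have hsum := intervalIntegral.sum_integral_adjacent_intervals (μ := volume)
    (f := fInt k l n) (a := fun j : ℕ => (j:ℝ)/2^n) (n := 2^n)
    (fun j _ => fInt_intervalIntegrable k l n _ _)
  have e0 : ((0:ℕ):ℝ)/2^n = 0 := by norm_num
  have e1 : (((2:ℕ)^n:ℕ):ℝ)/2^n = 1 := by
    push_cast; field_simp
  rw [show ((0:ℕ):ℝ)/(2:ℝ)^n = 0 from e0, e1] at hsum
  have hIcc : (∫ y in Icc (0:ℝ) 1, fInt k l n y) = ∫ y in (0:ℝ)..1, fInt k l n y := by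
    rw [intervalIntegral.integral_of_le zero_le_one, integral_Icc_eq_integral_Ioc]
  rw [hIcc, ← hsum]
  have : ∀ j ∈ Finset.range (2^n), (∫ y in ((j:ℕ):ℝ)/2^n..(((j:ℕ)+1:ℕ):ℝ)/2^n, fInt k l n y)
      = ((2:ℝ)^n)⁻¹ • ((Complex.exp (2 * Real.pi * Complex.I * ((k:ℂ) - l) / 2 ^ n))^j *
        gI k l n) := by
    intro j _
    have := interval_step k l n j
    rw [show (((j:ℕ)+1:ℕ):ℝ) = (j:ℝ)+1 by push_cast; ring]
    exact this
  rw [Finset.sum_congr rfl this, ← Finset.smul_sum, ← Finset.sum_mul]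

/-- If `Y` is uniform on `[0,1]` and `Y_n = Y − {2ⁿY}/2^{n+1}` (halving all
dyadic digits of `Y` beyond the `n`-th), then for all integers `k, l`,
`3·4ⁿ 𝔼[(e^{2πikY_n} − e^{2πikY})(e^{−2πilY_n} − e^{−2πilY})] → π²kl·1_{k=l}`. -/
theorem dyadic_halving_limit_quadratic_form
    {Ω : Type*} [MeasurableSpace Ω] (P : Measure Ω) [IsProbabilityMeasure P]
    (Y : Ω → ℝ) (hY : Measurable Y)
    (hunif : Measure.map Y P = volume.restrict (Icc (0:ℝ) 1)) :
    ∀ k l : ℤ,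
      Tendsto (fun n : ℕ =>
          ((3 * 4 ^ n : ℝ) : ℂ) *
            ∫ ω,
              (Complex.exp (2 * Real.pi * Complex.I * k *
                  (Y ω - Int.fract (2 ^ n * Y ω) / 2 ^ (n + 1))) -
                Complex.exp (2 * Real.pi * Complex.I * k * Y ω)) *
              (Complex.exp (-(2 * Real.pi * Complex.I * l *
                  (Y ω - Int.fract (2 ^ n * Y ω) / 2 ^ (n + 1)))) -
                Complex.exp (-(2 * Real.pi * Complex.I * l * Y ω))) ∂P)
        atTop
        (𝓝 ((Real.pi : ℂ) ^ 2 * (k : ℂ) * (l : ℂ) * (if k = l then 1 else 0))) := by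
  intro k l
  have htrans : ∀ n : ℕ,
      (∫ ω,
        (Complex.exp (2 * Real.pi * Complex.I * k *
            (Y ω - Int.fract (2 ^ n * Y ω) / 2 ^ (n + 1))) -
          Complex.exp (2 * Real.pi * Complex.I * k * Y ω)) *
        (Complex.exp (-(2 * Real.pi * Complex.I * l *
            (Y ω - Int.fract (2 ^ n * Y ω) / 2 ^ (n + 1)))) -
          Complex.exp (-(2 * Real.pi * Complex.I * l * Y ω))) ∂P)
      = ((2:ℝ)^n)⁻¹ • ((∑ j ∈ Finset.range (2^n),
          (Complex.exp (2 * Real.pi * Complex.I * ((k:ℂ) - l) / 2 ^ n))^j) * gI k l n) := by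
    intro n
    calc (∫ ω, _ ∂P) = ∫ ω, fInt k l n (Y ω) ∂P := rfl
      _ = ∫ y, fInt k l n y ∂(Measure.map Y P) :=
          (integral_map hY.aemeasurable ((fInt_measurable k l n).aestronglyMeasurable)).symm
      _ = ∫ y in Icc (0:ℝ) 1, fInt k l n y := by rw [hunif]
      _ = _ := integral_eq k l n
  by_cases hkl : k = l
  · subst hkl
    have hsimp : ∀ n : ℕ, ((2:ℝ)^n)⁻¹ • ((∑ j ∈ Finset.range (2^n),
        (Complex.exp (2 * Real.pi * Complex.I * ((k:ℂ) - k) / 2 ^ n))^j) * gI k k n)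
        = ∫ x in Ioc (0:ℝ) 1,
            ((Complex.exp (-(2 * Real.pi * Complex.I * k * x / 2^(n+1))) - 1) *
             (Complex.exp (2 * Real.pi * Complex.I * k * x / 2^(n+1)) - 1)) := by
      intro n
      have hω : Complex.exp (2 * Real.pi * Complex.I * ((k:ℂ) - k) / 2 ^ n) = 1 := by simp
      have hgI : gI k k n = ∫ x in Ioc (0:ℝ) 1,
          ((Complex.exp (-(2 * Real.pi * Complex.I * k * x / 2^(n+1))) - 1) *
           (Complex.exp (2 * Real.pi * Complex.I * k * x / 2^(n+1)) - 1)) := by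
        unfold gI
        rw [intervalIntegral.integral_of_le zero_le_one]
        refine setIntegral_congr_fun measurableSet_Ioc fun x _ => ?_
        simp
      rw [hω, hgI]
      simp only [one_pow, Finset.sum_const, Finset.card_range, nsmul_eq_mul, mul_one]
      rw [Complex.real_smul]
      push_cast
      rw [← mul_assoc]
      rw [inv_mul_cancel₀ (pow_ne_zero _ (two_ne_zero) : ((2:ℂ)^n) ≠ 0)]
      rw [one_mul]
    have htarget : (Real.pi:ℂ)^2 * (k:ℂ) * (k:ℂ) * (if k = k then 1 else 0)
        = (Real.pi:ℂ)^2 * (k:ℂ) * (k:ℂ) := by simp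
    rw [htarget]
    apply (tendsto_G k).congr
    intro n
    congr 1
    rw [htrans n, hsimp n]
  · have hev : ∀ᶠ n : ℕ in atTop,
        (0:ℂ) = ((3 * 4 ^ n : ℝ) : ℂ) *
          ∫ ω,
            (Complex.exp (2 * Real.pi * Complex.I * k *
                (Y ω - Int.fract (2 ^ n * Y ω) / 2 ^ (n + 1))) -
              Complex.exp (2 * Real.pi * Complex.I * k * Y ω)) *
            (Complex.exp (-(2 * Real.pi * Complex.I * l *
                (Y ω - Int.fract (2 ^ n * Y ω) / 2 ^ (n + 1)))) -
              Complex.exp (-(2 * Real.pi * Complex.I * l * Y ω))) ∂P := by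
      filter_upwards [eventually_ge_atTop ((k-l).natAbs)] with n hn
      rw [htrans n]
      have hlt : (k-l).natAbs < 2^n := lt_of_le_of_lt hn Nat.lt_two_pow_self
      have hπ : ((Real.pi:ℂ)) ≠ 0 := Complex.ofReal_ne_zero.2 Real.pi_ne_zero
      have h2nC : ((2:ℂ)^n) ≠ 0 := pow_ne_zero _ two_ne_zero
      have hω1 : Complex.exp (2 * Real.pi * Complex.I * ((k:ℂ) - l) / 2 ^ n) ≠ 1 := by
        rw [Ne, Complex.exp_eq_one_iff]
        rintro ⟨m, hm⟩
        have h2 : ((k:ℂ) - l) = m * 2^n := by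
          apply mul_left_cancel₀ (show ((2:ℂ) * Real.pi * Complex.I) ≠ 0 by
            simp [hπ, Complex.I_ne_zero])
          field_simp at hm
          linear_combination (2 * Real.pi * Complex.I) * hm
        have h3 : (k - l : ℤ) = m * 2^n := by exact_mod_cast h2
        have hm0 : m ≠ 0 := by
          rintro rfl
          simp at h3
          omega
        have h4 : 2^n ≤ (k-l).natAbs := by
          rw [h3, Int.natAbs_mul]
          have h5 : ((2:ℤ)^n).natAbs = 2^n := by simp [Int.natAbs_pow]
          rw [h5]
          exact Nat.le_mul_of_pos_left _ (Int.natAbs_pos.2 hm0)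
        omega
      have hωp : (Complex.exp (2 * Real.pi * Complex.I * ((k:ℂ) - l) / 2 ^ n))^(2^n) = 1 := by
        rw [← Complex.exp_nat_mul]
        have harg : ((2^n:ℕ):ℂ) * (2 * Real.pi * Complex.I * ((k:ℂ) - l) / 2 ^ n)
            = ((k - l : ℤ):ℂ) * (2 * Real.pi * Complex.I) := by
          push_cast
          field_simp
        rw [harg, Complex.exp_int_mul_two_pi_mul_I]
      rw [geom_sum_eq hω1, hωp]
      simp
    have htarget : (Real.pi:ℂ)^2 * (k:ℂ) * (l:ℂ) * (if k = l then 1 else 0) = 0 := by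
      simp [hkl]
    rw [htarget]
    exact Tendsto.congr' hev tendsto_const_nhds
end

section
/- Let Y be a real random variable whose law P_Y is Rajchman, and let Y_n^{(d)} := ⌊nY⌋/n be the approximation of Y by default (rounding down to the graduation of mesh 1/n). Then n(Y_n^{(d)} − Y) = −{nY} converges in distribution, as n → ∞, to −U where U is uniformly distributed on (0,1), and 𝔼[ n(Y_n^{(d)} − Y) ] → −1/2. -/
open MeasureTheory Filter Set
open scoped Topology Real

instance fact_zero_lt_one_real : Fact ((0:ℝ) < 1) := ⟨one_pos⟩

namespace Statement18

variable {Ω : Type*} [MeasurableSpace Ω] {P : Measure Ω} [IsProbabilityMeasure P]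
variable {Y : Ω → ℝ}

lemma integrable_of_bdd {E : Type*} [NormedAddCommGroup E] {g : Ω → E}
    (hg : AEStronglyMeasurable g P) (C : ℝ) (hC : ∀ ω, ‖g ω‖ ≤ C) :
    Integrable g P :=
  (integrable_const C).mono' hg (ae_of_all _ hC)

lemma fourier_tendsto (hY : Measurable Y)
    (hRaj : Tendsto (fun u : ℝ => ∫ x, Complex.exp (Complex.I * u * x) ∂(Measure.map Y P))
      (cocompact ℝ) (𝓝 0)) {k : ℤ} (hk : k ≠ 0) :
    Tendsto (fun n : ℕ => ∫ ω, fourier k (((n : ℝ) * Y ω : ℝ) : AddCircle (1:ℝ)) ∂P)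
      atTop (𝓝 0) := by
  have key : ∀ u : ℝ, (∫ x, Complex.exp (Complex.I * u * x) ∂(Measure.map Y P))
      = ∫ ω, Complex.exp (Complex.I * u * Y ω) ∂P := fun u =>
    integral_map hY.aemeasurable (Continuous.aestronglyMeasurable (by continuity))
  have h2 : ∀ n : ℕ, (∫ ω, fourier k (((n : ℝ) * Y ω : ℝ) : AddCircle (1:ℝ)) ∂P)
      = ∫ ω, Complex.exp (Complex.I * ((2 * π * k * n : ℝ) : ℂ) * Y ω) ∂P := by
    intro n
    refine integral_congr_ae (ae_of_all _ fun ω => ?_)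
    beta_reduce
    rw [fourier_coe_apply]
    congr 1
    push_cast
    ring
  have hcomp : Tendsto (fun n : ℕ => (2 * π * (k : ℝ) * n)) atTop (cocompact ℝ) := by
    rw [cocompact_eq_atBot_atTop]
    rcases lt_or_gt_of_ne hk with hneg | hpos
    · have hc : (2 * π * (k : ℝ)) < 0 := by
        have : (k : ℝ) < 0 := by exact_mod_cast hneg
        nlinarith [Real.pi_pos]
      exact (Tendsto.mono_right (Tendsto.const_mul_atTop_of_neg hc
        tendsto_natCast_atTop_atTop) le_sup_left)
    · have hc : (0:ℝ) < 2 * π * (k : ℝ) := by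
        have : (0:ℝ) < (k : ℝ) := by exact_mod_cast hpos
        nlinarith [Real.pi_pos]
      exact (Tendsto.mono_right (Tendsto.const_mul_atTop hc
        tendsto_natCast_atTop_atTop) le_sup_right)
  have := hRaj.comp hcomp
  simp only [Function.comp_def, key] at this
  exact Tendsto.congr (fun n => (h2 n).symm) this

lemma haar_fourier_zero {k : ℤ} (hk : k ≠ 0) :
    (∫ z : AddCircle (1:ℝ), fourier k z ∂AddCircle.haarAddCircle) = 0 :=
  integral_eq_zero_of_add_right_eq_neg (fourier_add_half_inv_index hk one_pos)

lemma dist_integral_le {α : Type*} [MeasurableSpace α] (μ : Measure α) [IsProbabilityMeasure μ]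
    {G₁ G₂ : α → ℂ} (h₁ : Integrable G₁ μ) (h₂ : Integrable G₂ μ) (C : ℝ)
    (hC : ∀ a, ‖G₁ a - G₂ a‖ ≤ C) : dist (∫ a, G₁ a ∂μ) (∫ a, G₂ a ∂μ) ≤ C := by
  rw [dist_eq_norm, ← integral_sub h₁ h₂]
  calc ‖∫ a, (G₁ a - G₂ a) ∂μ‖ ≤ C * (μ univ).toReal :=
        norm_integral_le_of_norm_le_const (ae_of_all _ hC)
    _ = C := by simp

lemma integrable_comp_circle (hY : Measurable Y) (G : C(AddCircle (1:ℝ), ℂ)) (n : ℕ) :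
    Integrable (fun ω => G (((n : ℝ) * Y ω : ℝ) : AddCircle (1:ℝ))) P := by
  refine integrable_of_bdd ?_ ‖G‖ (fun ω => G.norm_coe_le_norm _)
  exact ((G.continuous.comp (AddCircle.continuous_mk' 1)).measurable.comp
    (hY.const_mul _)).aestronglyMeasurable

lemma integrable_circ (G : C(AddCircle (1:ℝ), ℂ)) :
    Integrable (fun z => G z) (AddCircle.haarAddCircle (T := 1)) :=
  integrable_of_bdd G.continuous.measurable.aestronglyMeasurable ‖G‖
    (fun z => G.norm_coe_le_norm _)

lemma circle_tendsto (hY : Measurable Y)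
    (hRaj : Tendsto (fun u : ℝ => ∫ x, Complex.exp (Complex.I * u * x) ∂(Measure.map Y P))
      (cocompact ℝ) (𝓝 0)) (H : C(AddCircle (1:ℝ), ℂ)) :
    Tendsto (fun n : ℕ => ∫ ω, H (((n : ℝ) * Y ω : ℝ) : AddCircle (1:ℝ)) ∂P)
      atTop (𝓝 (∫ z, H z ∂AddCircle.haarAddCircle)) := by
  set T : Set C(AddCircle (1:ℝ), ℂ) :=
    {G | Tendsto (fun n : ℕ => ∫ ω, G (((n : ℝ) * Y ω : ℝ) : AddCircle (1:ℝ)) ∂P)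
      atTop (𝓝 (∫ z, G z ∂AddCircle.haarAddCircle))} with hT
  have hmem : ∀ G ∈ Set.range (fourier (T := 1)), G ∈ T := by
    rintro - ⟨k, rfl⟩
    by_cases hk : k = 0
    · subst hk
      have h1 : ∀ n : ℕ, (∫ ω, fourier 0 (((n : ℝ) * Y ω : ℝ) : AddCircle (1:ℝ)) ∂P) = 1 := by
        intro n
        simp only [fourier_zero]
        simp
      have h2 : (∫ z : AddCircle (1:ℝ), fourier 0 z ∂AddCircle.haarAddCircle) = 1 := by
        simp only [fourier_zero]
        simp
      simp only [hT, mem_setOf_eq, h2]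
      exact Tendsto.congr (fun n => (h1 n).symm) tendsto_const_nhds
    · simp only [hT, mem_setOf_eq, haar_fourier_zero hk]
      exact fourier_tendsto hY hRaj hk
  have hspan : ∀ G ∈ Submodule.span ℂ (Set.range (fourier (T := 1))), G ∈ T := by
    intro G hG
    induction hG using Submodule.span_induction with
    | mem x h => exact hmem x h
    | zero =>
      simp only [hT, mem_setOf_eq]
      have : ∀ n : ℕ, (∫ ω, (0 : C(AddCircle (1:ℝ), ℂ)) (((n : ℝ) * Y ω : ℝ) : AddCircle (1:ℝ)) ∂P)
          = 0 := by intro n; simp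
      rw [show (∫ z : AddCircle (1:ℝ), (0 : C(AddCircle (1:ℝ), ℂ)) z ∂AddCircle.haarAddCircle)
        = 0 by simp]
      exact Tendsto.congr (fun n => (this n).symm) tendsto_const_nhds
    | add x y hx hy ihx ihy =>
      simp only [hT, mem_setOf_eq] at ihx ihy ⊢
      have heq : ∀ n : ℕ, (∫ ω, (x + y) (((n : ℝ) * Y ω : ℝ) : AddCircle (1:ℝ)) ∂P)
          = (∫ ω, x (((n : ℝ) * Y ω : ℝ) : AddCircle (1:ℝ)) ∂P)
            + ∫ ω, y (((n : ℝ) * Y ω : ℝ) : AddCircle (1:ℝ)) ∂P := by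
        intro n
        rw [← integral_add (integrable_comp_circle hY x n) (integrable_comp_circle hY y n)]
        simp
      have heq2 : (∫ z : AddCircle (1:ℝ), (x + y) z ∂AddCircle.haarAddCircle)
          = (∫ z : AddCircle (1:ℝ), x z ∂AddCircle.haarAddCircle)
            + ∫ z : AddCircle (1:ℝ), y z ∂AddCircle.haarAddCircle := by
        rw [← integral_add (integrable_circ x) (integrable_circ y)]
        simp
      rw [heq2]
      exact Tendsto.congr (fun n => (heq n).symm) (ihx.add ihy)
    | smul a x hx ihx =>
      simp only [hT, mem_setOf_eq] at ihx ⊢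
      have heq : ∀ n : ℕ, (∫ ω, (a • x) (((n : ℝ) * Y ω : ℝ) : AddCircle (1:ℝ)) ∂P)
          = a • ∫ ω, x (((n : ℝ) * Y ω : ℝ) : AddCircle (1:ℝ)) ∂P := by
        intro n
        rw [← integral_smul]
        simp
      have heq2 : (∫ z : AddCircle (1:ℝ), (a • x) z ∂AddCircle.haarAddCircle)
          = a • ∫ z : AddCircle (1:ℝ), x z ∂AddCircle.haarAddCircle := by
        rw [← integral_smul]
        simp
      rw [heq2]
      exact Tendsto.congr (fun n => (heq n).symm) (ihx.const_smul a)
  have hHc : H ∈ closure ((Submodule.span ℂ (Set.range (fourier (T := 1)))) : Set _) := by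
    have := span_fourier_closure_eq_top (T := 1)
    have h2 : H ∈ (Submodule.span ℂ (Set.range (fourier (T := 1)))).topologicalClosure := by
      rw [this]; trivial
    rw [← Submodule.topologicalClosure_coe]
    exact h2
  rw [Metric.tendsto_nhds]
  intro ε hε
  rw [Metric.mem_closure_iff] at hHc
  obtain ⟨p, hpS, hpd⟩ := hHc (ε / 4) (by positivity)
  have hpT := hspan p hpS
  have hptend := (Metric.tendsto_nhds.1 hpT) (ε / 4) (by positivity)
  filter_upwards [hptend] with n hn
  have hd1 : dist (∫ ω, H (((n : ℝ) * Y ω : ℝ) : AddCircle (1:ℝ)) ∂P)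
      (∫ ω, p (((n : ℝ) * Y ω : ℝ) : AddCircle (1:ℝ)) ∂P) ≤ ε / 4 := by
    refine dist_integral_le P (integrable_comp_circle hY H n) (integrable_comp_circle hY p n)
      (ε / 4) (fun ω => ?_)
    calc ‖H (((n : ℝ) * Y ω : ℝ) : AddCircle (1:ℝ)) - p (((n : ℝ) * Y ω : ℝ) : AddCircle (1:ℝ))‖
        = dist (H (((n : ℝ) * Y ω : ℝ) : AddCircle (1:ℝ)))
            (p (((n : ℝ) * Y ω : ℝ) : AddCircle (1:ℝ))) := (dist_eq_norm _ _).symm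
      _ ≤ dist H p := ContinuousMap.dist_apply_le_dist _
      _ ≤ ε / 4 := le_of_lt hpd
  have hd3 : dist (∫ z : AddCircle (1:ℝ), p z ∂AddCircle.haarAddCircle)
      (∫ z : AddCircle (1:ℝ), H z ∂AddCircle.haarAddCircle) ≤ ε / 4 := by
    refine dist_integral_le _ (integrable_circ p) (integrable_circ H) (ε / 4) (fun z => ?_)
    calc ‖p z - H z‖ = dist (p z) (H z) := (dist_eq_norm _ _).symm
      _ ≤ dist p H := ContinuousMap.dist_apply_le_dist _
      _ ≤ ε / 4 := by rw [dist_comm]; exact le_of_lt hpd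
  have htri := dist_triangle4 (∫ ω, H (((n : ℝ) * Y ω : ℝ) : AddCircle (1:ℝ)) ∂P)
    (∫ ω, p (((n : ℝ) * Y ω : ℝ) : AddCircle (1:ℝ)) ∂P)
    (∫ z : AddCircle (1:ℝ), p z ∂AddCircle.haarAddCircle)
    (∫ z : AddCircle (1:ℝ), H z ∂AddCircle.haarAddCircle)
  linarith

lemma circle_tendsto_real (hY : Measurable Y)
    (hRaj : Tendsto (fun u : ℝ => ∫ x, Complex.exp (Complex.I * u * x) ∂(Measure.map Y P))
      (cocompact ℝ) (𝓝 0)) (h : C(AddCircle (1:ℝ), ℝ)) :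
    Tendsto (fun n : ℕ => ∫ ω, h (((n : ℝ) * Y ω : ℝ) : AddCircle (1:ℝ)) ∂P)
      atTop (𝓝 (∫ x in Ioc (0:ℝ) 1, h (x : AddCircle (1:ℝ)))) := by
  set H : C(AddCircle (1:ℝ), ℂ) :=
    ⟨fun z => ((h z : ℝ) : ℂ), Complex.continuous_ofReal.comp h.continuous⟩ with hH
  have hC := circle_tendsto hY hRaj H
  have h1 : ∀ n : ℕ, (∫ ω, H (((n : ℝ) * Y ω : ℝ) : AddCircle (1:ℝ)) ∂P)
      = (((∫ ω, h (((n : ℝ) * Y ω : ℝ) : AddCircle (1:ℝ)) ∂P : ℝ)) : ℂ) := fun n =>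
    integral_ofReal
  have h2 : (∫ z : AddCircle (1:ℝ), H z ∂AddCircle.haarAddCircle)
      = (((∫ z : AddCircle (1:ℝ), h z ∂AddCircle.haarAddCircle : ℝ)) : ℂ) := integral_ofReal
  rw [h2] at hC
  simp only [h1] at hC
  have hre := (Complex.continuous_re.tendsto _).comp hC
  simp only [Function.comp_def, Complex.ofReal_re] at hre
  have hpre := AddCircle.integral_preimage (1:ℝ) 0 (fun z : AddCircle (1:ℝ) => h z)
  rw [AddCircle.volume_eq_smul_haarAddCircle] at hpre
  simp only [ENNReal.ofReal_one, one_smul, zero_add] at hpre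
  rwa [hpre]

lemma coe_fract (t : ℝ) : ((t : ℝ) : AddCircle (1:ℝ)) = ((Int.fract t : ℝ) : AddCircle (1:ℝ)) := by
  have hz : (((⌊t⌋ : ℝ)) : AddCircle (1:ℝ)) = 0 := by
    refine (QuotientAddGroup.eq_zero_iff _).2 ?_
    exact ⟨⌊t⌋, by simp⟩
  calc ((t : ℝ) : AddCircle (1:ℝ)) = ((Int.fract t + (⌊t⌋ : ℝ) : ℝ) : AddCircle (1:ℝ)) := by
        rw [Int.fract_add_floor]
    _ = ((Int.fract t : ℝ) : AddCircle (1:ℝ)) + (((⌊t⌋ : ℝ)) : AddCircle (1:ℝ)) := by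
        rw [← QuotientAddGroup.mk_add]
    _ = ((Int.fract t : ℝ) : AddCircle (1:ℝ)) := by rw [hz, add_zero]

lemma fract_tendsto (hY : Measurable Y)
    (hRaj : Tendsto (fun u : ℝ => ∫ x, Complex.exp (Complex.I * u * x) ∂(Measure.map Y P))
      (cocompact ℝ) (𝓝 0)) {g : ℝ → ℝ} (hg : Continuous g) {M : ℝ}
    (hM : ∀ x, |g x| ≤ M) :
    Tendsto (fun n : ℕ => ∫ ω, g (Int.fract ((n : ℝ) * Y ω)) ∂P)
      atTop (𝓝 (∫ u in Ioo (0:ℝ) 1, g u)) := by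
  have hM0 : 0 ≤ M := le_trans (abs_nonneg _) (hM 0)
  rw [Metric.tendsto_nhds]
  intro ε hε
  set δ : ℝ := min (1/2) (ε / (16 * (M + 1))) with hδdef
  have hδ0 : 0 < δ := lt_min (by norm_num) (by positivity)
  have hδhalf : δ ≤ 1/2 := min_le_left _ _
  have hδsmall : 4 * M * δ ≤ ε / 4 := by
    have h1 : δ ≤ ε / (16 * (M + 1)) := min_le_right _ _
    have h2 : 4 * M * δ ≤ 4 * M * (ε / (16 * (M + 1))) :=
      mul_le_mul_of_nonneg_left h1 (by positivity)
    have h3 : 4 * M * (ε / (16 * (M + 1))) ≤ ε / 4 := by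
      have he : 4 * M * (ε / (16 * (M + 1))) = (4 * M * ε) / (16 * (M + 1)) := by ring
      rw [he, div_le_div_iff₀ (by positivity) (by norm_num : (0:ℝ) < 4)]
      nlinarith [hε.le, hM0]
    linarith
  -- the bump function ψ
  set ψ : ℝ → ℝ := fun x => max 0 (min 1 (max ((δ - x) / δ) ((x - (1 - δ)) / δ))) with hψdef
  have hψcont : Continuous ψ := by
    apply continuous_const.max
    apply continuous_const.min
    exact ((continuous_const.sub continuous_id).div_const δ).max
      ((continuous_id.sub continuous_const).div_const δ)
  have hψnn : ∀ x, 0 ≤ ψ x := fun x => le_max_left _ _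
  have hψle1 : ∀ x, ψ x ≤ 1 := fun x => max_le zero_le_one (min_le_left _ _)
  have hψ0 : ψ 0 = 1 := by
    simp only [hψdef]
    rw [sub_zero, div_self hδ0.ne', min_eq_left (le_max_left _ _), max_eq_right zero_le_one]
  have hψ1 : ψ 1 = 1 := by
    simp only [hψdef]
    have : (1 - (1 - δ)) / δ = 1 := by
      rw [sub_sub_cancel, div_self hδ0.ne']
    rw [this, min_eq_left (le_max_right _ _), max_eq_right zero_le_one]
  have hψmid : ∀ x, δ ≤ x → x ≤ 1 - δ → ψ x = 0 := by
    intro x h1 h2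
    have ha : (δ - x) / δ ≤ 0 := div_nonpos_of_nonpos_of_nonneg (by linarith) hδ0.le
    have hb : (x - (1 - δ)) / δ ≤ 0 := div_nonpos_of_nonpos_of_nonneg (by linarith) hδ0.le
    have hm : max ((δ - x) / δ) ((x - (1 - δ)) / δ) ≤ 0 := max_le ha hb
    simp only [hψdef]
    rw [min_eq_right (le_trans hm zero_le_one), max_eq_left hm]
  -- integral of ψ is small
  have hψint : (∫ x in Ioc (0:ℝ) 1, ψ x) ≤ 2 * δ := by
    set ind : ℝ → ℝ := fun x =>
      (Ioc (0:ℝ) δ).indicator (fun _ => (1:ℝ)) x + (Ioc (1-δ) 1).indicator (fun _ => (1:ℝ)) x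
      with hind
    have hbound : ∀ x ∈ Ioc (0:ℝ) 1, ψ x ≤ ind x := by
      intro x hx
      by_cases h1 : x ≤ δ
      · have e1 : (Ioc (0:ℝ) δ).indicator (fun _ => (1:ℝ)) x = 1 :=
          indicator_of_mem (mem_Ioc.2 ⟨hx.1, h1⟩) _
        have e2 : (0:ℝ) ≤ (Ioc (1-δ) 1).indicator (fun _ => (1:ℝ)) x :=
          indicator_nonneg (fun _ _ => zero_le_one) _
        simp only [hind]
        rw [e1]
        linarith [hψle1 x]
      · by_cases h2 : 1 - δ < x
        · have e1 : (Ioc (1-δ) 1).indicator (fun _ => (1:ℝ)) x = 1 :=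
            indicator_of_mem (mem_Ioc.2 ⟨h2, hx.2⟩) _
          have e2 : (0:ℝ) ≤ (Ioc (0:ℝ) δ).indicator (fun _ => (1:ℝ)) x :=
            indicator_nonneg (fun _ _ => zero_le_one) _
          simp only [hind]
          rw [e1]
          linarith [hψle1 x]
        · push_neg at h1 h2
          have : ψ x = 0 := hψmid x h1.le h2
          rw [this]
          simp only [hind]
          have e2 : (0:ℝ) ≤ (Ioc (1-δ) 1).indicator (fun _ => (1:ℝ)) x :=
            indicator_nonneg (fun _ _ => zero_le_one) _
          have e3 : (0:ℝ) ≤ (Ioc (0:ℝ) δ).indicator (fun _ => (1:ℝ)) x :=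
            indicator_nonneg (fun _ _ => zero_le_one) _
          linarith
    have hi1 : IntegrableOn ψ (Ioc (0:ℝ) 1) := hψcont.integrableOn_Ioc
    have hind1 : Integrable ((Ioc (0:ℝ) δ).indicator (fun _ => (1:ℝ)))
        (volume.restrict (Ioc (0:ℝ) 1)) := by
      refine (Integrable.indicator ?_ measurableSet_Ioc)
      exact integrableOn_const measure_Ioc_lt_top.ne
    have hind2 : Integrable ((Ioc (1-δ:ℝ) 1).indicator (fun _ => (1:ℝ)))
        (volume.restrict (Ioc (0:ℝ) 1)) := by
      refine (Integrable.indicator ?_ measurableSet_Ioc)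
      exact integrableOn_const measure_Ioc_lt_top.ne
    have hstep : (∫ x in Ioc (0:ℝ) 1, ψ x) ≤ ∫ x in Ioc (0:ℝ) 1, ind x :=
      setIntegral_mono_on hi1 (hind1.add hind2) measurableSet_Ioc hbound
    have hval : (∫ x in Ioc (0:ℝ) 1, ind x) ≤ 2 * δ := by
      simp only [hind]
      rw [integral_add hind1 hind2, integral_indicator_const _ measurableSet_Ioc,
        integral_indicator_const _ measurableSet_Ioc]
      have v1 : (volume.restrict (Ioc (0:ℝ) 1)) (Ioc (0:ℝ) δ) = ENNReal.ofReal δ := by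
        rw [Measure.restrict_apply measurableSet_Ioc,
          inter_eq_self_of_subset_left (Ioc_subset_Ioc_right (by linarith)), Real.volume_Ioc]
        norm_num
      have v2 : (volume.restrict (Ioc (0:ℝ) 1)) (Ioc (1-δ:ℝ) 1) = ENNReal.ofReal δ := by
        rw [Measure.restrict_apply measurableSet_Ioc,
          inter_eq_self_of_subset_left (Ioc_subset_Ioc_left (by linarith)), Real.volume_Ioc]
        norm_num
      rw [measureReal_def, measureReal_def, v1, v2, ENNReal.toReal_ofReal hδ0.le]
      simp only [smul_eq_mul, mul_one]
      linarith
    linarith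
  -- upper and lower continuous periodic envelopes
  set b : ℝ → ℝ := fun x => g x + ψ x * (M - g x) with hbdef
  set a : ℝ → ℝ := fun x => g x - ψ x * (M + g x) with hadef
  have hbcont : Continuous b := hg.add (hψcont.mul (continuous_const.sub hg))
  have hacont : Continuous a := hg.sub (hψcont.mul (continuous_const.add hg))
  have hgb : ∀ x, g x ≤ b x := by
    intro x
    have := abs_le.1 (hM x)
    have h1 : 0 ≤ ψ x * (M - g x) := mul_nonneg (hψnn x) (by linarith [this.2])
    simp only [hbdef]
    linarith
  have hag : ∀ x, a x ≤ g x := by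
    intro x
    have := abs_le.1 (hM x)
    have h1 : 0 ≤ ψ x * (M + g x) := mul_nonneg (hψnn x) (by linarith [this.1])
    simp only [hadef]
    linarith
  have hb01 : b 0 = b 1 := by simp only [hbdef, hψ0, hψ1]; ring
  have ha01 : a 0 = a 1 := by simp only [hadef, hψ0, hψ1]; ring
  set B : C(AddCircle (1:ℝ), ℝ) := ⟨AddCircle.liftIco 1 0 b,
    AddCircle.liftIco_zero_continuous hb01 hbcont.continuousOn⟩ with hBdef
  set A : C(AddCircle (1:ℝ), ℝ) := ⟨AddCircle.liftIco 1 0 a,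
    AddCircle.liftIco_zero_continuous ha01 hacont.continuousOn⟩ with hAdef
  have hBt : ∀ t : ℝ, B ((t : ℝ) : AddCircle (1:ℝ)) = b (Int.fract t) := by
    intro t
    rw [coe_fract t]
    exact AddCircle.liftIco_zero_coe_apply (f := b) ⟨Int.fract_nonneg t, Int.fract_lt_one t⟩
  have hAt : ∀ t : ℝ, A ((t : ℝ) : AddCircle (1:ℝ)) = a (Int.fract t) := by
    intro t
    rw [coe_fract t]
    exact AddCircle.liftIco_zero_coe_apply (f := a) ⟨Int.fract_nonneg t, Int.fract_lt_one t⟩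
  -- integrability over P
  have hintg : ∀ n : ℕ, Integrable (fun ω => g (Int.fract ((n : ℝ) * Y ω))) P := by
    intro n
    refine integrable_of_bdd ?_ M (fun ω => by rw [Real.norm_eq_abs]; exact hM _)
    exact (hg.measurable.comp (measurable_fract.comp (hY.const_mul _))).aestronglyMeasurable
  have hintB : ∀ n : ℕ, Integrable (fun ω => B (((n : ℝ) * Y ω : ℝ) : AddCircle (1:ℝ))) P := by
    intro n
    refine integrable_of_bdd ?_ ‖B‖ (fun ω => B.norm_coe_le_norm _)
    exact ((B.continuous.comp (AddCircle.continuous_mk' 1)).measurable.comp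
      (hY.const_mul _)).aestronglyMeasurable
  have hintA : ∀ n : ℕ, Integrable (fun ω => A (((n : ℝ) * Y ω : ℝ) : AddCircle (1:ℝ))) P := by
    intro n
    refine integrable_of_bdd ?_ ‖A‖ (fun ω => A.norm_coe_le_norm _)
    exact ((A.continuous.comp (AddCircle.continuous_mk' 1)).measurable.comp
      (hY.const_mul _)).aestronglyMeasurable
  -- sandwich
  have hsand1 : ∀ n : ℕ, (∫ ω, g (Int.fract ((n : ℝ) * Y ω)) ∂P)
      ≤ ∫ ω, B (((n : ℝ) * Y ω : ℝ) : AddCircle (1:ℝ)) ∂P := by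
    intro n
    refine integral_mono (hintg n) (hintB n) (fun ω => ?_)
    rw [hBt]
    exact hgb _
  have hsand2 : ∀ n : ℕ, (∫ ω, A (((n : ℝ) * Y ω : ℝ) : AddCircle (1:ℝ)) ∂P)
      ≤ ∫ ω, g (Int.fract ((n : ℝ) * Y ω)) ∂P := by
    intro n
    refine integral_mono (hintA n) (hintg n) (fun ω => ?_)
    rw [hAt]
    exact hag _
  -- limits of the envelopes
  have hBlim0 := circle_tendsto_real hY hRaj B
  have hAlim0 := circle_tendsto_real hY hRaj A
  have hBid : (∫ x in Ioc (0:ℝ) 1, B ((x : ℝ) : AddCircle (1:ℝ))) = ∫ x in Ioc (0:ℝ) 1, b x := by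
    rw [integral_Ioc_eq_integral_Ioo, integral_Ioc_eq_integral_Ioo]
    refine setIntegral_congr_fun measurableSet_Ioo (fun x hx => ?_)
    exact AddCircle.liftIco_zero_coe_apply (f := b) ⟨hx.1.le, hx.2⟩
  have hAid : (∫ x in Ioc (0:ℝ) 1, A ((x : ℝ) : AddCircle (1:ℝ))) = ∫ x in Ioc (0:ℝ) 1, a x := by
    rw [integral_Ioc_eq_integral_Ioo, integral_Ioc_eq_integral_Ioo]
    refine setIntegral_congr_fun measurableSet_Ioo (fun x hx => ?_)
    exact AddCircle.liftIco_zero_coe_apply (f := a) ⟨hx.1.le, hx.2⟩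
  rw [hBid] at hBlim0
  rw [hAid] at hAlim0
  -- integral bounds on the envelopes
  have hgint : IntegrableOn g (Ioc (0:ℝ) 1) := hg.integrableOn_Ioc
  have hbint : IntegrableOn b (Ioc (0:ℝ) 1) := hbcont.integrableOn_Ioc
  have haint : IntegrableOn a (Ioc (0:ℝ) 1) := hacont.integrableOn_Ioc
  have hψint' : IntegrableOn ψ (Ioc (0:ℝ) 1) := hψcont.integrableOn_Ioc
  have hbbound : (∫ x in Ioc (0:ℝ) 1, b x) ≤ (∫ x in Ioc (0:ℝ) 1, g x) + 4 * M * δ := by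
    have hpt : ∀ x ∈ Ioc (0:ℝ) 1, b x ≤ g x + 2 * M * ψ x := by
      intro x _
      have := abs_le.1 (hM x)
      have h1 : ψ x * (M - g x) ≤ ψ x * (2 * M) :=
        mul_le_mul_of_nonneg_left (by linarith [this.1]) (hψnn x)
      simp only [hbdef]
      nlinarith
    have hint2 : IntegrableOn (fun x => g x + 2 * M * ψ x) (Ioc (0:ℝ) 1) :=
      hgint.add (hψint'.const_mul (2 * M))
    have hstep : (∫ x in Ioc (0:ℝ) 1, b x) ≤ ∫ x in Ioc (0:ℝ) 1, (g x + 2 * M * ψ x) :=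
      setIntegral_mono_on hbint hint2 measurableSet_Ioc hpt
    have hsum : (∫ x in Ioc (0:ℝ) 1, (g x + 2 * M * ψ x))
        = (∫ x in Ioc (0:ℝ) 1, g x) + 2 * M * ∫ x in Ioc (0:ℝ) 1, ψ x := by
      rw [integral_add hgint (hψint'.const_mul (2 * M)), integral_const_mul]
    rw [hsum] at hstep
    nlinarith [mul_le_mul_of_nonneg_left hψint (by positivity : (0:ℝ) ≤ 2 * M)]
  have habound : (∫ x in Ioc (0:ℝ) 1, g x) - 4 * M * δ ≤ ∫ x in Ioc (0:ℝ) 1, a x := by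
    have hpt : ∀ x ∈ Ioc (0:ℝ) 1, g x - 2 * M * ψ x ≤ a x := by
      intro x _
      have := abs_le.1 (hM x)
      have h1 : ψ x * (M + g x) ≤ ψ x * (2 * M) :=
        mul_le_mul_of_nonneg_left (by linarith [this.2]) (hψnn x)
      simp only [hadef]
      nlinarith
    have hint2 : IntegrableOn (fun x => g x - 2 * M * ψ x) (Ioc (0:ℝ) 1) :=
      hgint.sub (hψint'.const_mul (2 * M))
    have hstep : (∫ x in Ioc (0:ℝ) 1, (g x - 2 * M * ψ x)) ≤ ∫ x in Ioc (0:ℝ) 1, a x :=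
      setIntegral_mono_on hint2 haint measurableSet_Ioc hpt
    have hsum : (∫ x in Ioc (0:ℝ) 1, (g x - 2 * M * ψ x))
        = (∫ x in Ioc (0:ℝ) 1, g x) - 2 * M * ∫ x in Ioc (0:ℝ) 1, ψ x := by
      rw [integral_sub hgint (hψint'.const_mul (2 * M)), integral_const_mul]
    rw [hsum] at hstep
    nlinarith [mul_le_mul_of_nonneg_left hψint (by positivity : (0:ℝ) ≤ 2 * M)]
  -- put everything together
  have hL : (∫ u in Ioo (0:ℝ) 1, g u) = ∫ x in Ioc (0:ℝ) 1, g x :=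
    (integral_Ioc_eq_integral_Ioo).symm
  filter_upwards [Metric.tendsto_nhds.1 hBlim0 (ε/4) (by positivity),
    Metric.tendsto_nhds.1 hAlim0 (ε/4) (by positivity)] with n h1 h2
  rw [Real.dist_eq] at h1 h2 ⊢
  rw [abs_lt] at h1 h2 ⊢
  have hs1 := hsand1 n
  have hs2 := hsand2 n
  constructor
  · rw [hL]
    linarith [h2.1, habound]
  · rw [hL]
    linarith [h1.2, hbbound]

end Statement18

open Statement18 in
/-- If the law of `Y` is Rajchman and `Y_n^{(d)} = ⌊nY⌋/n` is the approximation
by default, then `n(Y_n^{(d)} − Y) = −{nY}` converges in distribution to `−U` with `U`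
uniform on `(0,1)`, and `𝔼[n(Y_n^{(d)} − Y)] → −1/2`. -/
theorem default_graduation_limit
    {Ω : Type*} [MeasurableSpace Ω] (P : Measure Ω) [IsProbabilityMeasure P]
    (Y : Ω → ℝ) (hY : Measurable Y)
    (hRaj : Tendsto (fun u : ℝ => ∫ x, Complex.exp (Complex.I * u * x) ∂(Measure.map Y P))
      (cocompact ℝ) (𝓝 0)) :
    (∀ f : BoundedContinuousFunction ℝ ℝ,
      Tendsto (fun n : ℕ => ∫ ω, f ((n : ℝ) * (⌊(n : ℝ) * Y ω⌋ / (n : ℝ) - Y ω)) ∂P)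
        atTop (𝓝 (∫ u in Ioo (0:ℝ) 1, f (-u)))) ∧
    Tendsto (fun n : ℕ => ∫ ω, (n : ℝ) * (⌊(n : ℝ) * Y ω⌋ / (n : ℝ) - Y ω) ∂P)
      atTop (𝓝 (-(1 / 2))) := by
  have key : ∀ f : BoundedContinuousFunction ℝ ℝ,
      Tendsto (fun n : ℕ => ∫ ω, f ((n : ℝ) * (⌊(n : ℝ) * Y ω⌋ / (n : ℝ) - Y ω)) ∂P)
        atTop (𝓝 (∫ u in Ioo (0:ℝ) 1, f (-u))) := by
    intro f
    have hg : Continuous (fun u : ℝ => f (-u)) := f.continuous.comp continuous_neg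
    have hM : ∀ x, |f (-x)| ≤ ‖f‖ := fun x => by
      simpa [Real.norm_eq_abs] using f.norm_coe_le_norm (-x)
    have main := fract_tendsto (P := P) hY hRaj hg hM
    refine Tendsto.congr' ?_ main
    filter_upwards [eventually_ge_atTop 1] with n hn
    refine integral_congr_ae (ae_of_all _ fun ω => ?_)
    beta_reduce
    have hn0 : (n : ℝ) ≠ 0 := by positivity
    have h2 : (n : ℝ) * ((⌊(n : ℝ) * Y ω⌋ : ℝ) / (n : ℝ) - Y ω)
        = (⌊(n : ℝ) * Y ω⌋ : ℝ) - (n : ℝ) * Y ω := by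
      field_simp
    rw [h2, ← Int.self_sub_floor, neg_sub]
  refine ⟨key, ?_⟩
  -- apply with the clamp function
  set c : ℝ → ℝ := fun x => max (min x 0) (-1) with hc
  have hcont : Continuous c := (continuous_id.min continuous_const).max continuous_const
  have hbdd : ∀ x y : ℝ, dist (c x) (c y) ≤ 2 := by
    intro x y
    have h1 : c x ∈ Icc (-1:ℝ) 0 := ⟨le_max_right _ _, max_le (min_le_right _ _) (by norm_num)⟩
    have h2 : c y ∈ Icc (-1:ℝ) 0 := ⟨le_max_right _ _, max_le (min_le_right _ _) (by norm_num)⟩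
    rw [Real.dist_eq, abs_le]
    constructor <;> nlinarith [h1.1, h1.2, h2.1, h2.2]
  set f : BoundedContinuousFunction ℝ ℝ := ⟨⟨c, hcont⟩, 2, hbdd⟩ with hf
  have hkey := key f
  have hceq : ∀ (n : ℕ) (ω : Ω), f ((n : ℝ) * (⌊(n : ℝ) * Y ω⌋ / (n : ℝ) - Y ω))
      = (n : ℝ) * (⌊(n : ℝ) * Y ω⌋ / (n : ℝ) - Y ω) := by
    intro n ω
    rcases Nat.eq_zero_or_pos n with h0 | hpos
    · subst h0
      simp only [Nat.cast_zero, zero_mul]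
      show ((0:ℝ) ⊓ 0 ⊔ -1) = 0
      norm_num
    have hn0 : (n : ℝ) ≠ 0 := by positivity
    have hval : (n : ℝ) * (⌊(n : ℝ) * Y ω⌋ / (n : ℝ) - Y ω) = -Int.fract ((n : ℝ) * Y ω) := by
      have h2 : (n : ℝ) * ((⌊(n : ℝ) * Y ω⌋ : ℝ) / (n : ℝ) - Y ω)
          = (⌊(n : ℝ) * Y ω⌋ : ℝ) - (n : ℝ) * Y ω := by field_simp
      rw [h2, ← Int.self_sub_floor, neg_sub]
    have h1 : -Int.fract ((n : ℝ) * Y ω) ≤ 0 := neg_nonpos.2 (Int.fract_nonneg _)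
    have h2 : (-1 : ℝ) ≤ -Int.fract ((n : ℝ) * Y ω) := by
      have := Int.fract_lt_one ((n : ℝ) * Y ω); linarith
    rw [hval]
    show max (min (-Int.fract ((n : ℝ) * Y ω)) 0) (-1) = _
    rw [min_eq_left h1, max_eq_left h2]
  have hlim : (∫ u in Ioo (0:ℝ) 1, f (-u)) = -(1/2) := by
    have : ∀ u ∈ Ioo (0:ℝ) 1, f (-u) = -u := by
      intro u hu
      show max (min (-u) 0) (-1) = -u
      rw [min_eq_left (by linarith [hu.1]), max_eq_left (by linarith [hu.2])]
    rw [setIntegral_congr_fun measurableSet_Ioo this]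
    rw [← integral_Ioc_eq_integral_Ioo, ← intervalIntegral.integral_of_le zero_le_one]
    rw [intervalIntegral.integral_neg, integral_id]
    norm_num
  rw [hlim] at hkey
  refine Tendsto.congr (fun n => ?_) hkey
  exact integral_congr_ae (ae_of_all _ fun ω => hceq n ω)
end
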